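/- arXiv:2502.17245 — 6 statements merged into one kernel-verified Lean document; each statement's English description precedes it below -/
import Mathlib

section
/- Let u : ℝ^d → N be Borel measurable. If the double integral ∬_{ℝ^d × ℝ^d} dist_N(u(x), u(y)) dx dy is finite, then u is constant almost everywhere, i.e. there exists b ∈ N such that u(x) = b for almost every x ∈ ℝ^d. -/
open MeasureTheory ENNReal

/-- If the double integral of `dist (u x) (u y)` over `ℝ^d × ℝ^d` is finite, then `u`
is constant almost everywhere. -/
theorem stmt_1 (d : ℕ) (hd : 1 ≤ d)
    {N : Type*} [MetricSpace N] [CompleteSpace N] [TopologicalSpace.SeparableSpace N]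
    [MeasurableSpace N] [BorelSpace N]
    (u : EuclideanSpace ℝ (Fin d) → N) (hu : Measurable u)
    (h : ∫⁻ p : EuclideanSpace ℝ (Fin d) × EuclideanSpace ℝ (Fin d),
        edist (u p.1) (u p.2) < ⊤) :
    ∃ b : N, ∀ᵐ x : EuclideanSpace ℝ (Fin d), u x = b := by
  haveI : Nonempty (Fin d) := ⟨⟨0, hd⟩⟩
  haveI : Nontrivial (EuclideanSpace ℝ (Fin d)) := inferInstanceAs (Nontrivial (PiLp 2 fun _ : Fin d => ℝ))
  have hμtop : (volume : Measure (EuclideanSpace ℝ (Fin d))) Set.univ = ⊤ :=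
    measure_univ_of_isAddLeftInvariant (volume : Measure (EuclideanSpace ℝ (Fin d)))
  -- measurability of f
  have hf : Measurable fun p : EuclideanSpace ℝ (Fin d) × EuclideanSpace ℝ (Fin d) => edist (u p.1) (u p.2) := by
    exact (hu.comp measurable_fst).edist (hu.comp measurable_snd)
  have hintegral : ∫⁻ p : EuclideanSpace ℝ (Fin d) × EuclideanSpace ℝ (Fin d), edist (u p.1) (u p.2)
      ∂((volume : Measure (EuclideanSpace ℝ (Fin d))).prod volume) < ⊤ := by
    rw [← Measure.volume_eq_prod]; exact h
  -- for each ε positive, the superlevel set has finite product measure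
  have hslice : ∀ n : ℕ, ∀ᵐ x : EuclideanSpace ℝ (Fin d),
      volume {y : EuclideanSpace ℝ (Fin d) | ((n:ℝ≥0∞)+1)⁻¹ ≤ edist (u x) (u y)} < ⊤ := by
    intro n
    set ε : ℝ≥0∞ := ((n:ℝ≥0∞)+1)⁻¹ with hε
    have hε0 : ε ≠ 0 := by simp [hε]
    have hεtop : ε ≠ ⊤ := by simp [hε]
    have hmeas : MeasurableSet {p : EuclideanSpace ℝ (Fin d) × EuclideanSpace ℝ (Fin d) | ε ≤ edist (u p.1) (u p.2)} :=
      measurableSet_le measurable_const hf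
    have hmark : ((volume : Measure (EuclideanSpace ℝ (Fin d))).prod volume)
        {p : EuclideanSpace ℝ (Fin d) × EuclideanSpace ℝ (Fin d) | ε ≤ edist (u p.1) (u p.2)} < ⊤ := by
      have := mul_meas_ge_le_lintegral (μ := (volume : Measure (EuclideanSpace ℝ (Fin d))).prod volume) hf ε
      by_contra hc
      push_neg at hc
      rw [top_le_iff] at hc
      rw [hc, ENNReal.mul_top hε0] at this
      exact absurd (lt_of_le_of_lt this hintegral) (lt_irrefl _)
    rw [Measure.prod_apply hmeas] at hmark
    have hmeasfun : Measurable fun x : EuclideanSpace ℝ (Fin d) =>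
        volume (Prod.mk x ⁻¹' {p : EuclideanSpace ℝ (Fin d) × EuclideanSpace ℝ (Fin d) | ε ≤ edist (u p.1) (u p.2)}) :=
      measurable_measure_prodMk_left hmeas
    have := ae_lt_top hmeasfun hmark.ne
    filter_upwards [this] with x hx
    exact hx
  have hae : ∀ᵐ x : EuclideanSpace ℝ (Fin d), ∀ n : ℕ,
      volume {y : EuclideanSpace ℝ (Fin d) | ((n:ℝ≥0∞)+1)⁻¹ ≤ edist (u x) (u y)} < ⊤ :=
    ae_all_iff.mpr hslice
  haveI : (ae (volume : Measure (EuclideanSpace ℝ (Fin d)))).NeBot := by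
    rw [ae_neBot]
    intro h0
    rw [h0] at hμtop
    simp at hμtop
  obtain ⟨x₀, hx₀⟩ := hae.exists
  refine ⟨u x₀, ?_⟩
  -- claim: for each n, the set {y | (n+1)⁻¹ ≤ edist (u x₀) (u y)} is null
  have hnull : ∀ n : ℕ, volume {y : EuclideanSpace ℝ (Fin d) | ((n:ℝ≥0∞)+1)⁻¹ ≤ edist (u x₀) (u y)} = 0 := by
    intro n
    by_contra hB
    set ε : ℝ≥0∞ := ((n:ℝ≥0∞)+1)⁻¹ with hε
    have hε0 : ε ≠ 0 := by simp [hε]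
    have hεtop : ε ≠ ⊤ := by simp [hε]
    set B : Set (EuclideanSpace ℝ (Fin d)) := {y : EuclideanSpace ℝ (Fin d) | ε ≤ edist (u x₀) (u y)} with hBdef
    set G : Set (EuclideanSpace ℝ (Fin d)) := {z : EuclideanSpace ℝ (Fin d) | edist (u x₀) (u z) < ε / 2} with hGdef
    have hGc : Gᶜ ⊆ {z : EuclideanSpace ℝ (Fin d) | ((2*n+1:ℝ≥0∞)+1)⁻¹ ≤ edist (u x₀) (u z)} := by
      intro z hz
      simp only [hGdef, Set.mem_compl_iff, Set.mem_setOf_eq, not_lt] at hz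
      have : ((2*n+1:ℝ≥0∞)+1)⁻¹ ≤ ε / 2 := by
        rw [hε, ENNReal.div_eq_inv_mul, ← ENNReal.mul_inv (by simp) (by simp)]
        apply ENNReal.inv_le_inv.mpr
        rw [mul_add]
        ring_nf
        exact le_refl _
      exact le_trans this hz
    have hGcfin : volume Gᶜ < ⊤ := by
      refine lt_of_le_of_lt (measure_mono hGc) ?_
      have := hx₀ (2*n+1)
      convert this using 3
      push_cast
      ring
    have hGinf : volume G = ⊤ := by
      by_contra hG
      have : (volume : Measure (EuclideanSpace ℝ (Fin d))) Set.univ < ⊤ := by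
        calc (volume : Measure (EuclideanSpace ℝ (Fin d))) Set.univ ≤ volume G + volume Gᶜ := by
              rw [← Set.union_compl_self G]; exact measure_union_le _ _
        _ < ⊤ := ENNReal.add_lt_top.mpr ⟨lt_top_iff_ne_top.mpr hG, hGcfin⟩
      rw [hμtop] at this; exact absurd this (lt_irrefl _)
    -- lower bound on the double integral
    have hlow : ∀ p : EuclideanSpace ℝ (Fin d) × EuclideanSpace ℝ (Fin d), p ∈ B ×ˢ G → ε / 2 ≤ edist (u p.1) (u p.2) := by
      rintro ⟨y, z⟩ ⟨hy, hz⟩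
      simp only [hBdef, Set.mem_setOf_eq] at hy
      simp only [hGdef, Set.mem_setOf_eq] at hz
      by_contra hlt
      push_neg at hlt
      have : edist (u x₀) (u y) < ε := by
        calc edist (u x₀) (u y) ≤ edist (u x₀) (u z) + edist (u z) (u y) :=
              edist_triangle _ _ _
        _ < ε / 2 + ε / 2 := by
              exact ENNReal.add_lt_add hz (by rwa [edist_comm])
        _ = ε := ENNReal.add_halves ε
      exact absurd hy this.not_ge
    have hBmeas : MeasurableSet B := measurableSet_le measurable_const
      (measurable_const.edist hu)
    have hGmeas : MeasurableSet G := measurableSet_lt (measurable_const.edist hu)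
      measurable_const
    have hineq : ε / 2 * (volume B * volume G) ≤
        ∫⁻ p : EuclideanSpace ℝ (Fin d) × EuclideanSpace ℝ (Fin d), edist (u p.1) (u p.2) ∂((volume : Measure (EuclideanSpace ℝ (Fin d))).prod volume) := by
      calc ε / 2 * (volume B * volume G)
          = ε / 2 * ((volume : Measure (EuclideanSpace ℝ (Fin d))).prod volume) (B ×ˢ G) := by
            rw [Measure.prod_prod]
        _ = ∫⁻ _ in B ×ˢ G, ε / 2 ∂((volume : Measure (EuclideanSpace ℝ (Fin d))).prod volume) := by
            rw [setLIntegral_const]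
        _ ≤ ∫⁻ p in B ×ˢ G, edist (u p.1) (u p.2)
              ∂((volume : Measure (EuclideanSpace ℝ (Fin d))).prod volume) :=
            setLIntegral_mono hf (fun p hp => hlow p hp)
        _ ≤ _ := setLIntegral_le_lintegral _ _
    have : (⊤ : ℝ≥0∞) ≤ ∫⁻ p : EuclideanSpace ℝ (Fin d) × EuclideanSpace ℝ (Fin d), edist (u p.1) (u p.2)
        ∂((volume : Measure (EuclideanSpace ℝ (Fin d))).prod volume) := by
      refine le_trans (le_of_eq ?_) hineq
      rw [hGinf, ENNReal.mul_top hB, ENNReal.mul_top]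
      simp [hε0]
    exact absurd (lt_of_le_of_lt this hintegral) (lt_irrefl _)
  have : volume {y : EuclideanSpace ℝ (Fin d) | u y ≠ u x₀} = 0 := by
    have hsub : {y : EuclideanSpace ℝ (Fin d) | u y ≠ u x₀} ⊆
        ⋃ n : ℕ, {y : EuclideanSpace ℝ (Fin d) | ((n:ℝ≥0∞)+1)⁻¹ ≤ edist (u x₀) (u y)} := by
      intro y hy
      have hpos : edist (u x₀) (u y) ≠ 0 := by
        rw [← pos_iff_ne_zero, edist_pos]
        exact fun hc => hy hc.symm
      obtain ⟨n, hn⟩ := ENNReal.exists_inv_nat_lt hpos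
      refine Set.mem_iUnion.mpr ⟨n, ?_⟩
      have : ((n:ℝ≥0∞)+1)⁻¹ ≤ (n:ℝ≥0∞)⁻¹ :=
        ENNReal.inv_le_inv.mpr (le_add_of_nonneg_right zero_le_one)
      exact le_trans this hn.le
    refine measure_mono_null hsub ?_
    rw [measure_iUnion_null_iff]
    exact hnull
  filter_upwards [measure_eq_zero_iff_ae_notMem.mp this] with y hy
  simpa using hy
end

section
/- (Bourgain–Brezis–Mironescu–Maz'ya–Shaposhnikova-type formula.) Let u : ℝ^d → N be Borel measurable. Then there exists b_* ∈ N such that ∫_{ℝ^d} dist_N(u(x), b_*) dx = (1/2) · lim_{R → ∞} (1/|B^d_R|) ∬_{{(x,y) ∈ ℝ^d × ℝ^d : |x − y| ≤ R}} dist_N(u(x), u(y)) dx dy, where the limit exists in [0, ∞] and both sides may simultaneously equal +∞. -/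
open MeasureTheory Filter Metric Set ENNReal

namespace BBMStmt3

@[reducible] private def Euc (d : ℕ) : Type := EuclideanSpace ℝ (Fin d)

variable {d : ℕ} {N : Type*} [MetricSpace N] [MeasurableSpace N] [OpensMeasurableSpace N]
  [SecondCountableTopology N]



private lemma measurableSet_S (R : ℝ) :
    MeasurableSet {p : Euc d × Euc d | dist p.1 p.2 ≤ R} :=
  (isClosed_le (continuous_fst.dist continuous_snd) continuous_const).measurableSet

private lemma slice_outer_fst (F : Euc d × Euc d → ℝ≥0∞) (hF : Measurable F) (R : ℝ) :
    ∫⁻ p in {p : Euc d × Euc d | dist p.1 p.2 ≤ R}, F p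
      = ∫⁻ x, ∫⁻ y in closedBall x R, F (x, y) := by
  rw [← lintegral_indicator (measurableSet_S R), Measure.volume_eq_prod,
    lintegral_prod _ ((hF.indicator (measurableSet_S R))).aemeasurable]
  refine lintegral_congr fun x => ?_
  rw [← lintegral_indicator measurableSet_closedBall]
  refine lintegral_congr fun y => ?_
  by_cases h : dist x y ≤ R
  · rw [Set.indicator_of_mem (show (x, y) ∈ {p : Euc d × Euc d | dist p.1 p.2 ≤ R} from h),
      Set.indicator_of_mem (by simpa [mem_closedBall, dist_comm] using h)]
  · rw [Set.indicator_of_notMem (show (x, y) ∉ {p : Euc d × Euc d | dist p.1 p.2 ≤ R} from h),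
      Set.indicator_of_notMem (by simpa [mem_closedBall, dist_comm] using h)]

private lemma slice_outer_snd (F : Euc d × Euc d → ℝ≥0∞) (hF : Measurable F) (R : ℝ) :
    ∫⁻ p in {p : Euc d × Euc d | dist p.1 p.2 ≤ R}, F p
      = ∫⁻ y, ∫⁻ x in closedBall y R, F (x, y) := by
  rw [← lintegral_indicator (measurableSet_S R), Measure.volume_eq_prod,
    lintegral_prod_symm _ ((hF.indicator (measurableSet_S R))).aemeasurable]
  refine lintegral_congr fun y => ?_
  rw [← lintegral_indicator measurableSet_closedBall]
  refine lintegral_congr fun x => ?_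
  by_cases h : dist x y ≤ R
  · rw [Set.indicator_of_mem (show (x, y) ∈ {p : Euc d × Euc d | dist p.1 p.2 ≤ R} from h),
      Set.indicator_of_mem (by simpa [mem_closedBall] using h)]
  · rw [Set.indicator_of_notMem (show (x, y) ∉ {p : Euc d × Euc d | dist p.1 p.2 ≤ R} from h),
      Set.indicator_of_notMem (by simpa [mem_closedBall] using h)]

private lemma slice_fst (a : Euc d → ℝ≥0∞) (ha : Measurable a) (R : ℝ) :
    ∫⁻ p in {p : Euc d × Euc d | dist p.1 p.2 ≤ R}, a p.1
      = (∫⁻ x, a x) * volume (closedBall (0 : Euc d) R) := by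
  rw [slice_outer_fst (fun p => a p.1) (ha.comp measurable_fst) R,
    ← lintegral_mul_const _ ha]
  refine lintegral_congr fun x => ?_
  dsimp only
  rw [setLIntegral_const, Measure.addHaar_closedBall_center]

private lemma slice_snd (a : Euc d → ℝ≥0∞) (ha : Measurable a) (R : ℝ) :
    ∫⁻ p in {p : Euc d × Euc d | dist p.1 p.2 ≤ R}, a p.2
      = (∫⁻ x, a x) * volume (closedBall (0 : Euc d) R) := by
  rw [slice_outer_snd (fun p => a p.2) (ha.comp measurable_snd) R,
    ← lintegral_mul_const _ ha]
  refine lintegral_congr fun y => ?_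
  dsimp only
  rw [setLIntegral_const, Measure.addHaar_closedBall_center]

private lemma upper_bound (u : Euc d → N) (hu : Measurable u) (b : N) (R : ℝ) :
    (∫⁻ p in {p : Euc d × Euc d | dist p.1 p.2 ≤ R}, edist (u p.1) (u p.2))
      ≤ 2 * (∫⁻ x, edist (u x) b) * volume (closedBall (0 : Euc d) R) := by
  have ha : Measurable fun x : Euc d => edist (u x) b := hu.edist measurable_const
  have ha1 : Measurable fun p : Euc d × Euc d => edist (u p.1) b := ha.comp measurable_fst
  calc (∫⁻ p in {p : Euc d × Euc d | dist p.1 p.2 ≤ R}, edist (u p.1) (u p.2))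
      ≤ ∫⁻ p in {p : Euc d × Euc d | dist p.1 p.2 ≤ R}, (edist (u p.1) b + edist (u p.2) b) :=
        setLIntegral_mono' (measurableSet_S R) fun p _ => edist_triangle_right _ _ _
    _ = (∫⁻ x, edist (u x) b) * volume (closedBall (0 : Euc d) R)
          + (∫⁻ x, edist (u x) b) * volume (closedBall (0 : Euc d) R) := by
        rw [lintegral_add_left ha1, slice_fst _ ha, slice_snd _ ha]
    _ = 2 * (∫⁻ x, edist (u x) b) * volume (closedBall (0 : Euc d) R) := by ring

private lemma lower_bound (u : Euc d → N) (hu : Measurable u) (b : N) (t : ℝ≥0∞) (R : ℝ) :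
    2 * (∫⁻ x, edist (u x) b) * volume (closedBall (0 : Euc d) R)
      ≤ (∫⁻ p in {p : Euc d × Euc d | dist p.1 p.2 ≤ R}, edist (u p.1) (u p.2))
        + 2 * (∫⁻ x, min (edist (u x) b) t) * volume (closedBall (0 : Euc d) R)
        + 2 * ((∫⁻ x, edist (u x) b) * volume {x : Euc d | t ≤ edist (u x) b}) := by
  set a : Euc d → ℝ≥0∞ := fun x => edist (u x) b with ha_def
  have ha : Measurable a := hu.edist measurable_const
  have ha1 : Measurable fun p : Euc d × Euc d => a p.1 := ha.comp measurable_fst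
  have hmin2 : Measurable fun p : Euc d × Euc d => min (a p.2) t :=
    (ha.comp measurable_snd).min measurable_const
  have hT : MeasurableSet {x : Euc d | t ≤ a x} := measurableSet_le measurable_const ha
  set S : Set (Euc d × Euc d) := {p : Euc d × Euc d | dist p.1 p.2 ≤ R} with hS_def
  set v : ℝ≥0∞ := volume (closedBall (0 : Euc d) R) with hv_def
  have hFmeas : Measurable fun p : Euc d × Euc d => edist (u p.1) (u p.2) :=
    (hu.comp measurable_fst).edist (hu.comp measurable_snd)
  have hGmeas : Measurable fun p : Euc d × Euc d => 2 * min (a p.2) t :=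
    ((ha.comp measurable_snd).min measurable_const).const_mul 2
  have hind : Measurable ({x : Euc d | t ≤ a x}.indicator (1 : Euc d → ℝ≥0∞)) :=
    measurable_one.indicator hT
  have hHmeas : Measurable fun p : Euc d × Euc d =>
      a p.1 * {x : Euc d | t ≤ a x}.indicator 1 p.2 :=
    (ha.comp measurable_fst).mul (hind.comp measurable_snd)
  have hpt : ∀ p : Euc d × Euc d, a p.1 + a p.2 ≤
      edist (u p.1) (u p.2) + 2 * min (a p.2) t
        + 2 * (a p.1 * {x : Euc d | t ≤ a x}.indicator 1 p.2) := by
    intro p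
    have key : a p.1 + a p.2 ≤ edist (u p.1) (u p.2) + 2 * min (a p.1) (a p.2) := by
      rcases le_total (a p.1) (a p.2) with h | h
      · have h2 : a p.2 ≤ edist (u p.2) (u p.1) + a p.1 := edist_triangle _ _ _
        calc a p.1 + a p.2 ≤ a p.1 + (edist (u p.2) (u p.1) + a p.1) := by gcongr
          _ = edist (u p.1) (u p.2) + 2 * min (a p.1) (a p.2) := by
              rw [min_eq_left h, edist_comm]; ring
      · have h2 : a p.1 ≤ edist (u p.1) (u p.2) + a p.2 := edist_triangle _ _ _
        calc a p.1 + a p.2 ≤ (edist (u p.1) (u p.2) + a p.2) + a p.2 := by gcongr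
          _ = edist (u p.1) (u p.2) + 2 * min (a p.1) (a p.2) := by
              rw [min_eq_right h]; ring
    have key2 : min (a p.1) (a p.2)
        ≤ min (a p.2) t + a p.1 * {x : Euc d | t ≤ a x}.indicator 1 p.2 := by
      rcases le_or_gt t (a p.2) with h | h
      · have hmem : p.2 ∈ {x : Euc d | t ≤ a x} := h
        rw [Set.indicator_of_mem hmem, Pi.one_apply, mul_one]
        exact (min_le_left _ _).trans (self_le_add_left _ _)
      · have hmem : p.2 ∉ {x : Euc d | t ≤ a x} := not_le.mpr h
        rw [Set.indicator_of_notMem hmem, mul_zero, add_zero, min_eq_left h.le]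
        exact min_le_right _ _
    calc a p.1 + a p.2 ≤ edist (u p.1) (u p.2) + 2 * min (a p.1) (a p.2) := key
      _ ≤ edist (u p.1) (u p.2)
            + 2 * (min (a p.2) t + a p.1 * {x : Euc d | t ≤ a x}.indicator 1 p.2) := by gcongr
      _ = edist (u p.1) (u p.2) + 2 * min (a p.2) t
            + 2 * (a p.1 * {x : Euc d | t ≤ a x}.indicator 1 p.2) := by ring
  have hH : (∫⁻ p in S, a p.1 * {x : Euc d | t ≤ a x}.indicator 1 p.2)
      ≤ (∫⁻ x, a x) * volume {x : Euc d | t ≤ a x} := by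
    rw [slice_outer_snd _ hHmeas R]
    calc (∫⁻ y, ∫⁻ x in closedBall y R, a x * {x : Euc d | t ≤ a x}.indicator 1 y)
        = ∫⁻ y, (∫⁻ x in closedBall y R, a x) * {x : Euc d | t ≤ a x}.indicator 1 y :=
          lintegral_congr fun y => lintegral_mul_const _ ha
      _ ≤ ∫⁻ y, (∫⁻ x, a x) * {x : Euc d | t ≤ a x}.indicator 1 y :=
          lintegral_mono fun y => mul_le_mul_left (setLIntegral_le_lintegral _ _) _
      _ = (∫⁻ x, a x) * volume {x : Euc d | t ≤ a x} := by
          rw [lintegral_const_mul _ hind, lintegral_indicator_one hT]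
  calc 2 * (∫⁻ x, a x) * v = ∫⁻ p in S, (a p.1 + a p.2) := by
        rw [lintegral_add_left ha1, slice_fst _ ha, slice_snd _ ha]
        ring
    _ ≤ ∫⁻ p in S, (edist (u p.1) (u p.2) + 2 * min (a p.2) t
          + 2 * (a p.1 * {x : Euc d | t ≤ a x}.indicator 1 p.2)) :=
        setLIntegral_mono' (measurableSet_S R) fun p _ => hpt p
    _ = (∫⁻ p in S, edist (u p.1) (u p.2)) + (∫⁻ p in S, 2 * min (a p.2) t)
          + ∫⁻ p in S, 2 * (a p.1 * {x : Euc d | t ≤ a x}.indicator 1 p.2) := by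
        rw [lintegral_add_left (f := fun p : Euc d × Euc d => edist (u p.1) (u p.2) + 2 * min (a p.2) t) (hFmeas.add hGmeas), lintegral_add_left hFmeas]
    _ ≤ (∫⁻ p in S, edist (u p.1) (u p.2))
          + 2 * (∫⁻ x, min (a x) t) * v
          + 2 * ((∫⁻ x, a x) * volume {x : Euc d | t ≤ a x}) := by
        have h1 : (∫⁻ p in S, 2 * min (a p.2) t) = 2 * (∫⁻ x, min (a x) t) * v := by
          rw [lintegral_const_mul _ hmin2,
            slice_snd (fun x => min (a x) t) (ha.min measurable_const) R]
          ring
        have h2 : (∫⁻ p in S, 2 * (a p.1 * {x : Euc d | t ≤ a x}.indicator 1 p.2))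
            ≤ 2 * ((∫⁻ x, a x) * volume {x : Euc d | t ≤ a x}) := by
          rw [lintegral_const_mul _ hHmeas]
          exact mul_le_mul_right hH 2
        rw [h1]
        gcongr

private lemma vB_tendsto_top (hd : 1 ≤ d) :
    Tendsto (fun R : ℝ => volume (closedBall (0 : Euc d) R)) atTop (nhds ⊤) := by
  haveI : Nonempty (Fin d) := ⟨⟨0, hd⟩⟩
  have hball : volume (ball (0 : Euc d) 1) ≠ 0 := (measure_ball_pos _ _ one_pos).ne'
  have h0 : Tendsto (fun R : ℝ => ENNReal.ofReal (R ^ d)) atTop (nhds ⊤) :=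
    ENNReal.tendsto_ofReal_atTop.comp (tendsto_pow_atTop (by omega))
  have h1 : Tendsto (fun R : ℝ => ENNReal.ofReal (R ^ d) * volume (ball (0 : Euc d) 1)) atTop
      (nhds (⊤ * volume (ball (0 : Euc d) 1))) :=
    ENNReal.Tendsto.mul_const h0 (Or.inl (by simp : (⊤ : ℝ≥0∞) ≠ 0))
  rw [ENNReal.top_mul hball] at h1
  refine h1.congr' ?_
  filter_upwards [eventually_ge_atTop (0 : ℝ)] with R hR
  rw [Measure.addHaar_closedBall volume 0 hR, finrank_euclideanSpace_fin]

private lemma vB_ne_zero {R : ℝ} (hR : 0 < R) : volume (closedBall (0 : Euc d) R) ≠ 0 :=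
  (measure_closedBall_pos volume _ hR).ne'

private lemma vB_ne_top (R : ℝ) : volume (closedBall (0 : Euc d) R) ≠ ⊤ :=
  measure_closedBall_lt_top.ne

private lemma tendsto_of_finite (hd : 1 ≤ d) (u : Euc d → N) (hu : Measurable u) (b : N)
    (hA : (∫⁻ x, edist (u x) b) ≠ ⊤) :
    Tendsto (fun R : ℝ =>
        (∫⁻ p in {p : Euc d × Euc d | dist p.1 p.2 ≤ R}, edist (u p.1) (u p.2))
          / volume (closedBall (0 : Euc d) R)) atTop
      (nhds (2 * ∫⁻ x, edist (u x) b)) := by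
  set a : Euc d → ℝ≥0∞ := fun x => edist (u x) b with ha_def
  have ha : Measurable a := hu.edist measurable_const
  set A : ℝ≥0∞ := ∫⁻ x, a x with hA_def
  rw [ENNReal.tendsto_nhds (ENNReal.mul_ne_top (by simp) hA)]
  intro ε hε
  set δ : ℝ≥0∞ := min ε 1 with hδ_def
  have hδ0 : δ ≠ 0 := (lt_min hε zero_lt_one).ne'
  have hδt : δ ≠ ⊤ := ne_top_of_le_ne_top one_ne_top (min_le_right _ _)
  have hδ8 : (0 : ℝ≥0∞) < δ / 8 := ENNReal.div_pos hδ0 (by norm_num)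
  obtain ⟨t, ht0, htt, hmt⟩ : ∃ t : ℝ≥0∞, t ≠ 0 ∧ t ≠ ⊤ ∧ (∫⁻ x, min (a x) t) < δ / 8 := by
    have htend : Tendsto (fun n : ℕ => ∫⁻ x, min (a x) ((n : ℝ≥0∞))⁻¹) atTop (nhds 0) := by
      have := tendsto_lintegral_of_dominated_convergence (μ := volume)
        (F := fun (n : ℕ) (x : Euc d) => min (a x) ((n : ℝ≥0∞))⁻¹) (f := fun _ => 0) a
        (fun n => ha.min measurable_const)
        (fun n => Eventually.of_forall fun x => min_le_left _ _) hA
        (Eventually.of_forall fun x => ?_)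
      · simpa using this
      · exact tendsto_of_tendsto_of_tendsto_of_le_of_le tendsto_const_nhds
          ENNReal.tendsto_inv_nat_nhds_zero (fun n => zero_le) fun n => min_le_right _ _
    have := (htend.eventually (gt_mem_nhds hδ8)).and (eventually_ge_atTop 1)
    obtain ⟨n, hn1, hn2⟩ := this.exists
    refine ⟨(n : ℝ≥0∞)⁻¹, ?_, ?_, hn1⟩
    · exact ENNReal.inv_ne_zero.mpr (ENNReal.natCast_ne_top n)
    · exact ENNReal.inv_ne_top.mpr (by exact_mod_cast Nat.one_le_iff_ne_zero.mp hn2)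
  set T : Set (Euc d) := {x : Euc d | t ≤ a x} with hT_def
  have hvT : volume T < ⊤ := by
    have h1 : t * volume T ≤ A := by
      have := mul_meas_ge_le_lintegral₀ (μ := volume) ha.aemeasurable t
      exact this
    have h2 : volume T ≤ A / t := ENNReal.le_div_iff_mul_le (Or.inl ht0) (Or.inl htt) |>.mpr
      (by rwa [mul_comm] at h1)
    exact h2.trans_lt (ENNReal.div_lt_top hA ht0)
  have hC : A * volume T ≠ ⊤ := ENNReal.mul_ne_top hA hvT.ne
  set K : ℝ≥0∞ := 2 * (A * volume T) / (δ / 8) with hK_def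
  have hKt : K < ⊤ := ENNReal.div_lt_top (ENNReal.mul_ne_top (by simp) hC) hδ8.ne'
  filter_upwards [eventually_gt_atTop (0 : ℝ), (vB_tendsto_top hd).eventually (lt_mem_nhds hKt)]
    with R hR0 hRK
  set v : ℝ≥0∞ := volume (closedBall (0 : Euc d) R) with hv_def
  have hv0 : v ≠ 0 := vB_ne_zero hR0
  have hvtop : v ≠ ⊤ := vB_ne_top R
  set D : ℝ≥0∞ := ∫⁻ p in {p : Euc d × Euc d | dist p.1 p.2 ≤ R}, edist (u p.1) (u p.2) with hD_def
  have hupper : D / v ≤ 2 * A := ENNReal.div_le_of_le_mul (upper_bound u hu b R)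
  refine Set.mem_Icc.mpr ⟨?_, hupper.trans le_self_add⟩
  -- lower bound
  have hKle : 2 * (A * volume T) ≤ δ / 8 * v := by
    calc 2 * (A * volume T) = δ / 8 * K :=
          (ENNReal.mul_div_cancel hδ8.ne' (ENNReal.div_lt_top hδt (by norm_num)).ne).symm
      _ ≤ δ / 8 * v := mul_le_mul_right hRK.le _
  have hmain : 2 * A * v ≤ D + δ * v := by
    calc 2 * A * v ≤ D + 2 * (∫⁻ x, min (a x) t) * v + 2 * (A * volume T) :=
          lower_bound u hu b t R
      _ ≤ D + 2 * (δ / 8) * v + δ / 8 * v := by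
          have hmt' : (∫⁻ x, min (a x) t) ≤ δ / 8 := hmt.le
          exact add_le_add (add_le_add le_rfl (by gcongr)) hKle
      _ = D + (2 * (δ / 8) + δ / 8) * v := by ring
      _ ≤ D + δ * v := by
          gcongr
          calc 2 * (δ / 8) + δ / 8 = 3 * (δ / 8) := by ring
            _ ≤ 8 * (δ / 8) := by gcongr <;> norm_num
            _ = δ := ENNReal.mul_div_cancel (by norm_num) (by norm_num)
  have h2A : 2 * A ≤ D / v + δ := by
    have h1 : 2 * A = 2 * A * v / v := by
      rw [mul_div_assoc, ENNReal.div_self hv0 hvtop, mul_one]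
    rw [h1]
    calc 2 * A * v / v ≤ (D + δ * v) / v := by gcongr
      _ = D / v + δ * v / v := ENNReal.add_div
      _ = D / v + δ := by rw [mul_div_assoc, ENNReal.div_self hv0 hvtop, mul_one]
  rw [tsub_le_iff_right]
  exact h2A.trans (add_le_add le_rfl (min_le_left _ _))

private lemma exists_finite [CompleteSpace N] (hd : 1 ≤ d) (u : Euc d → N) (hu : Measurable u)
    {M : ℝ≥0∞} (hM : M ≠ ⊤)
    (hfreq : ∃ᶠ R in atTop,
      (∫⁻ p in {p : Euc d × Euc d | dist p.1 p.2 ≤ R}, edist (u p.1) (u p.2))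
        / volume (closedBall (0 : Euc d) R) ≤ M) :
    ∃ b : N, (∫⁻ x, edist (u x) b) ≠ ⊤ := by
  haveI : Nonempty (Fin d) := ⟨⟨0, hd⟩⟩
  have hF : Measurable fun p : Euc d × Euc d => edist (u p.1) (u p.2) :=
    (hu.comp measurable_fst).edist (hu.comp measurable_snd)
  set C : ℝ≥0∞ := M * ENNReal.ofReal (2 ^ d) + 1 with hC_def
  have hC_top : C ≠ ⊤ :=
    ENNReal.add_ne_top.mpr ⟨ENNReal.mul_ne_top hM ENNReal.ofReal_ne_top, ENNReal.one_ne_top⟩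
  have hsel : ∀ n : ℕ, ∃ R : ℝ, R ≥ max (n : ℝ) 1 ∧
      (∫⁻ p in {p : Euc d × Euc d | dist p.1 p.2 ≤ R}, edist (u p.1) (u p.2))
        / volume (closedBall (0 : Euc d) R) ≤ M :=
    fun n => frequently_atTop.mp hfreq _
  choose R hR1 hRM using hsel
  have hRpos : ∀ n, (0 : ℝ) < R n := fun n =>
    lt_of_lt_of_le (lt_of_lt_of_le one_pos (le_max_right _ 1)) (hR1 n)
  have hRn : ∀ n : ℕ, (n : ℝ) ≤ R n := fun n => (le_max_left _ _).trans (hR1 n)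
  set Q : ℕ → Set (Euc d) := fun n => closedBall 0 (R n / 2) with hQ_def
  have hm0 : ∀ n, volume (Q n) ≠ 0 := fun n =>
    (measure_closedBall_pos volume _ (by have := hRpos n; positivity)).ne'
  have hmtop : ∀ n, volume (Q n) ≠ ⊤ := fun n => measure_closedBall_lt_top.ne
  have hDv : ∀ n, (∫⁻ y in Q n, ∫⁻ x in Q n, edist (u x) (u y))
      ≤ M * ENNReal.ofReal (2 ^ d) * volume (Q n) := by
    intro n
    have hsub : Q n ×ˢ Q n ⊆ {p : Euc d × Euc d | dist p.1 p.2 ≤ R n} := by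
      rintro ⟨x, y⟩ ⟨hx, hy⟩
      simp only [hQ_def, mem_closedBall] at hx hy
      have h3 := dist_triangle x (0 : Euc d) y
      have h4 : dist (0 : Euc d) y = dist y 0 := dist_comm _ _
      simp only [Set.mem_setOf_eq]
      rw [h4] at h3
      calc dist x y ≤ dist x 0 + dist y 0 := h3
        _ ≤ R n / 2 + R n / 2 := add_le_add hx hy
        _ = R n := by ring
    have h1 : (∫⁻ p in Q n ×ˢ Q n, edist (u p.1) (u p.2))
        = ∫⁻ y in Q n, ∫⁻ x in Q n, edist (u x) (u y) := by
      rw [Measure.volume_eq_prod, ← Measure.prod_restrict,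
        lintegral_prod_symm _ hF.aemeasurable]
    have h2 : (∫⁻ p in Q n ×ˢ Q n, edist (u p.1) (u p.2))
        ≤ ∫⁻ p in {p : Euc d × Euc d | dist p.1 p.2 ≤ R n}, edist (u p.1) (u p.2) :=
      lintegral_mono_set hsub
    have h3 : (∫⁻ p in {p : Euc d × Euc d | dist p.1 p.2 ≤ R n}, edist (u p.1) (u p.2))
        ≤ M * volume (closedBall (0 : Euc d) (R n)) :=
      (ENNReal.div_le_iff (vB_ne_zero (hRpos n)) (vB_ne_top _)).mp (hRM n)
    have h4 : volume (closedBall (0 : Euc d) (R n)) = ENNReal.ofReal (2 ^ d) * volume (Q n) := by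
      rw [hQ_def]
      rw [Measure.addHaar_closedBall volume 0 (hRpos n).le,
        Measure.addHaar_closedBall volume 0 (by have := hRpos n; positivity : (0 : ℝ) ≤ R n / 2),
        finrank_euclideanSpace_fin, ← mul_assoc, ← ENNReal.ofReal_mul (by positivity)]
      congr 2
      rw [div_pow, mul_div_cancel₀]
      positivity
    rw [← h1]
    refine h2.trans (h3.trans_eq ?_)
    rw [h4, ← mul_assoc]
  have hy : ∀ n, ∃ z ∈ Q n, (∫⁻ x in Q n, edist (u x) (u z)) ≤ C := by
    intro n
    by_contra hcon
    push_neg at hcon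
    have hle : C * volume (Q n) ≤ M * ENNReal.ofReal (2 ^ d) * volume (Q n) := by
      calc C * volume (Q n) = ∫⁻ _ in Q n, C := (setLIntegral_const _ _).symm
        _ ≤ ∫⁻ z in Q n, ∫⁻ x in Q n, edist (u x) (u z) :=
            setLIntegral_mono' measurableSet_closedBall fun z hz => (hcon z hz).le
        _ ≤ _ := hDv n
    have hle2 : C ≤ M * ENNReal.ofReal (2 ^ d) :=
      (ENNReal.mul_le_mul_iff_left (hm0 n) (hmtop n)).mp hle
    exact absurd hle2 (not_le.mpr
      (ENNReal.lt_add_right (ENNReal.mul_ne_top hM ENNReal.ofReal_ne_top) one_ne_zero))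
  choose y hyQ hyC using hy
  have hQsub : ∀ {k n : ℕ}, k ≤ n → closedBall (0 : Euc d) ((k : ℝ) / 2) ⊆ Q n := by
    intro k n hkn
    apply closedBall_subset_closedBall
    have h1 : (k : ℝ) ≤ n := Nat.cast_le.mpr hkn
    have h2 := hRn n
    linarith
  have hCauchy : CauchySeq fun n => u (y n) := by
    rw [EMetric.cauchySeq_iff]
    intro ε hε
    set ε' : ℝ≥0∞ := min (ε / 2) 1 with hε'_def
    have hε'0 : ε' ≠ 0 := (lt_min (ENNReal.div_pos hε.ne' (by norm_num)) zero_lt_one).ne'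
    have hε't : ε' ≠ ⊤ := ne_top_of_le_ne_top ENNReal.one_ne_top (min_le_right _ _)
    have hε'lt : ε' < ε := by
      rcases eq_or_ne ε ⊤ with rfl | hne
      · exact (min_le_right _ _).trans_lt (by simp)
      · exact (min_le_left _ _).trans_lt (ENNReal.half_lt_self hε.ne' hne)
    set K : ℝ≥0∞ := 2 * C / ε' with hK_def
    have hKt : K < ⊤ := ENNReal.div_lt_top (ENNReal.mul_ne_top (by simp) hC_top) hε'0
    have hwtend : Tendsto (fun k : ℕ => volume (closedBall (0 : Euc d) ((k : ℝ) / 2))) atTop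
        (nhds ⊤) :=
      (vB_tendsto_top hd).comp (tendsto_natCast_atTop_atTop.atTop_div_const two_pos)
    obtain ⟨k0, hk0⟩ := (hwtend.eventually (lt_mem_nhds hKt)).exists
    refine ⟨k0, fun m hm n hn => ?_⟩
    set w : ℝ≥0∞ := volume (closedBall (0 : Euc d) ((k0 : ℝ) / 2)) with hw_def
    have hw0 : w ≠ 0 := (lt_of_le_of_lt (zero_le : (0:ℝ≥0∞) ≤ K) hk0).ne'
    have hwt : w ≠ ⊤ := measure_closedBall_lt_top.ne
    have hint : edist (u (y m)) (u (y n)) * w ≤ 2 * C := by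
      calc edist (u (y m)) (u (y n)) * w
          = ∫⁻ _ in closedBall (0 : Euc d) ((k0 : ℝ) / 2), edist (u (y m)) (u (y n)) :=
            (setLIntegral_const _ _).symm
        _ ≤ ∫⁻ x in closedBall (0 : Euc d) ((k0 : ℝ) / 2),
              (edist (u x) (u (y m)) + edist (u x) (u (y n))) := by
            refine setLIntegral_mono' measurableSet_closedBall fun x _ => ?_
            calc edist (u (y m)) (u (y n))
                ≤ edist (u (y m)) (u x) + edist (u x) (u (y n)) := edist_triangle _ _ _
              _ = edist (u x) (u (y m)) + edist (u x) (u (y n)) := by rw [edist_comm]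
        _ = (∫⁻ x in closedBall (0 : Euc d) ((k0 : ℝ) / 2), edist (u x) (u (y m)))
              + ∫⁻ x in closedBall (0 : Euc d) ((k0 : ℝ) / 2), edist (u x) (u (y n)) :=
            lintegral_add_left (hu.edist measurable_const) _
        _ ≤ C + C := add_le_add
            ((lintegral_mono_set (hQsub hm)).trans (hyC m))
            ((lintegral_mono_set (hQsub hn)).trans (hyC n))
        _ = 2 * C := (two_mul C).symm
    have hle : edist (u (y m)) (u (y n)) ≤ 2 * C / w :=
      (ENNReal.le_div_iff_mul_le (Or.inl hw0) (Or.inl hwt)).mpr hint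
    refine lt_of_le_of_lt (hle.trans ?_) hε'lt
    rw [ENNReal.div_le_iff hw0 hwt]
    calc 2 * C = ε' * (2 * C / ε') := (ENNReal.mul_div_cancel hε'0 hε't).symm
      _ ≤ ε' * w := mul_le_mul_right hk0.le _
  obtain ⟨b, hb⟩ := cauchySeq_tendsto_of_complete hCauchy
  refine ⟨b, ?_⟩
  have hmeasb : Measurable fun x : Euc d => edist (u x) b := hu.edist measurable_const
  have hball : ∀ k : ℕ, (∫⁻ x in closedBall (0 : Euc d) (k : ℝ), edist (u x) b) ≤ C := by
    intro k
    have hmeas : ∀ n, Measurable fun x : Euc d => edist (u x) (u (y n)) := fun n =>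
      hu.edist measurable_const
    have hpt : ∀ x : Euc d, edist (u x) b = liminf (fun n => edist (u x) (u (y n))) atTop :=
      fun x => (Tendsto.liminf_eq (tendsto_const_nhds.edist hb)).symm
    calc (∫⁻ x in closedBall (0 : Euc d) (k : ℝ), edist (u x) b)
        = ∫⁻ x in closedBall (0 : Euc d) (k : ℝ),
            liminf (fun n => edist (u x) (u (y n))) atTop := lintegral_congr fun x => hpt x
      _ ≤ liminf (fun n => ∫⁻ x in closedBall (0 : Euc d) (k : ℝ), edist (u x) (u (y n))) atTop :=
          lintegral_liminf_le hmeas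
      _ ≤ C := by
          have hev : ∀ᶠ n in atTop,
              (∫⁻ x in closedBall (0 : Euc d) (k : ℝ), edist (u x) (u (y n))) ≤ C := by
            filter_upwards [eventually_ge_atTop (2 * k)] with n hn
            have hsub : closedBall (0 : Euc d) (k : ℝ) ⊆ Q n := by
              apply closedBall_subset_closedBall
              have h1 : ((2 * k : ℕ) : ℝ) ≤ (n : ℝ) := Nat.cast_le.mpr hn
              push_cast at h1
              linarith [hRn n]
            exact (lintegral_mono_set hsub).trans (hyC n)
          exact le_trans liminf_le_limsup (limsup_le_of_le (h := hev))
  have hfin : (∫⁻ x, edist (u x) b) ≤ C := by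
    have hpt : ∀ x : Euc d, edist (u x) b = liminf
        (fun k : ℕ => (closedBall (0 : Euc d) (k : ℝ)).indicator (fun z => edist (u z) b) x)
        atTop := by
      intro x
      have hev : ∀ᶠ k : ℕ in atTop,
          (closedBall (0 : Euc d) (k : ℝ)).indicator (fun z => edist (u z) b) x
            = edist (u x) b := by
        filter_upwards [eventually_ge_atTop ⌈‖x‖⌉₊] with k hk
        refine Set.indicator_of_mem ?_ _
        rw [mem_closedBall, dist_zero_right]
        exact (Nat.le_ceil _).trans (by exact_mod_cast hk)
      exact (Tendsto.liminf_eq (tendsto_const_nhds.congr'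
        (hev.mono fun k hk => hk.symm))).symm
    calc (∫⁻ x, edist (u x) b)
        = ∫⁻ x, liminf
            (fun k : ℕ => (closedBall (0 : Euc d) (k : ℝ)).indicator (fun z => edist (u z) b) x)
            atTop := lintegral_congr hpt
      _ ≤ liminf (fun k : ℕ =>
            ∫⁻ x, (closedBall (0 : Euc d) (k : ℝ)).indicator (fun z => edist (u z) b) x) atTop :=
          lintegral_liminf_le fun k => hmeasb.indicator measurableSet_closedBall
      _ ≤ C := by
          have hev : ∀ᶠ k : ℕ in atTop,
              (∫⁻ x, (closedBall (0 : Euc d) (k : ℝ)).indicator (fun z => edist (u z) b) x)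
                ≤ C := by
            refine Eventually.of_forall fun k => ?_
            rw [lintegral_indicator measurableSet_closedBall]
            exact hball k
          exact le_trans liminf_le_limsup (limsup_le_of_le (h := hev))
  exact ne_top_of_le_ne_top hC_top hfin

end BBMStmt3

open BBMStmt3 in
/-- Bourgain–Brezis–Mironescu–Maz'ya–Shaposhnikova-type formula: there is `b_* ∈ N` such
that `∫ dist (u x) b_*` equals half the limit as `R → ∞` of
`(1/|B^d_R|) ∬_{|x-y| ≤ R} dist (u x) (u y)`, the limit existing in `[0,∞]`. -/
theorem stmt_3 (d : ℕ) (hd : 1 ≤ d)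
    {N : Type*} [MetricSpace N] [CompleteSpace N] [TopologicalSpace.SeparableSpace N]
    [MeasurableSpace N] [BorelSpace N]
    (u : EuclideanSpace ℝ (Fin d) → N) (hu : Measurable u) :
    ∃ b : N, Tendsto
      (fun R : ℝ =>
        (∫⁻ p in {p : EuclideanSpace ℝ (Fin d) × EuclideanSpace ℝ (Fin d) |
            dist p.1 p.2 ≤ R}, edist (u p.1) (u p.2))
          / volume (Metric.ball (0 : EuclideanSpace ℝ (Fin d)) R))
      atTop (nhds (2 * ∫⁻ x, edist (u x) b)) := by
  haveI : Nonempty (Fin d) := ⟨⟨0, hd⟩⟩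
  haveI : Nontrivial (EuclideanSpace ℝ (Fin d)) := inferInstance
  haveI := UniformSpace.secondCountable_of_separable N
  have hbe : (fun R : ℝ =>
      (∫⁻ p in {p : EuclideanSpace ℝ (Fin d) × EuclideanSpace ℝ (Fin d) |
          dist p.1 p.2 ≤ R}, edist (u p.1) (u p.2))
        / volume (Metric.ball (0 : EuclideanSpace ℝ (Fin d)) R))
      = fun R : ℝ =>
      (∫⁻ p in {p : EuclideanSpace ℝ (Fin d) × EuclideanSpace ℝ (Fin d) |
          dist p.1 p.2 ≤ R}, edist (u p.1) (u p.2))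
        / volume (closedBall (0 : EuclideanSpace ℝ (Fin d)) R) := by
    funext R
    rw [Measure.addHaar_closedBall_eq_addHaar_ball]
  rw [hbe]
  by_cases hfin : ∃ b : N, (∫⁻ x, edist (u x) b) ≠ ⊤
  · obtain ⟨b, hb⟩ := hfin
    exact ⟨b, tendsto_of_finite hd u hu b hb⟩
  · push_neg at hfin
    refine ⟨u 0, ?_⟩
    rw [hfin (u 0), ENNReal.mul_top (by norm_num)]
    apply ENNReal.tendsto_nhds_top
    intro n
    by_contra hev
    rw [Filter.not_eventually] at hev
    have hfreq : ∃ᶠ R in atTop,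
        (∫⁻ p in {p : EuclideanSpace ℝ (Fin d) × EuclideanSpace ℝ (Fin d) |
            dist p.1 p.2 ≤ R}, edist (u p.1) (u p.2))
          / volume (closedBall (0 : EuclideanSpace ℝ (Fin d)) R) ≤ (n : ℝ≥0∞) :=
      hev.mono fun R hR => not_lt.mp hR
    obtain ⟨b, hb⟩ := exists_finite hd u hu (ENNReal.natCast_ne_top n) hfreq
    exact hb (hfin b)
end

section
/- Let u : ℝ^d → N be Borel measurable. There exists a constant A_d > 0, depending only on d, such that for every R > 0 and all x, y ∈ ℝ^d with |x − y| ≤ R, dist_N(u(x), u(y)) ≤ A_d · ( ⨍_{B^d(x,R)} dist_N(u(x), u(z)) dz + ⨍_{B^d(y,R)} dist_N(u(y), u(z)) dz ). -/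
open MeasureTheory

/-- There is a constant `A_d > 0`, depending only on `d`, such that for every Borel
measurable `u : ℝ^d → N`, every `R > 0` and all `x, y` with `|x - y| ≤ R`,
`dist (u x) (u y) ≤ A_d * (⨍_{B(x,R)} dist (u x) (u z) dz + ⨍_{B(y,R)} dist (u y) (u z) dz)`. -/
theorem stmt_7 (d : ℕ) (hd : 1 ≤ d)
    {N : Type*} [MetricSpace N] [CompleteSpace N] [TopologicalSpace.SeparableSpace N]
    [MeasurableSpace N] [BorelSpace N] :
    ∃ A : ℝ, 0 < A ∧ ∀ u : EuclideanSpace ℝ (Fin d) → N, Measurable u →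
      ∀ (R : ℝ), 0 < R → ∀ x y : EuclideanSpace ℝ (Fin d), dist x y ≤ R →
        edist (u x) (u y)
          ≤ ENNReal.ofReal A *
            ((∫⁻ z in Metric.ball x R, edist (u x) (u z)) / volume (Metric.ball x R)
              + (∫⁻ z in Metric.ball y R, edist (u y) (u z)) / volume (Metric.ball y R)) := by
  haveI : Nonempty (Fin d) := ⟨⟨0, hd⟩⟩
  refine ⟨2 ^ d, by positivity, ?_⟩
  intro u hu R hR x y hxy
  set m := midpoint ℝ x y with hm
  set S := Metric.ball m (R / 2) with hS
  have hRd : (0:ℝ) ≤ R := hR.le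
  have hR2 : (0:ℝ) ≤ R / 2 := by linarith
  -- S is contained in both balls
  have hSx : S ⊆ Metric.ball x R := by
    intro z hz
    rw [Metric.mem_ball] at hz ⊢
    have h1 : dist z x ≤ dist z m + dist m x := dist_triangle _ _ _
    have h2 : dist m x = dist x y / 2 := by
      rw [dist_comm, dist_left_midpoint]
      simp; ring
    nlinarith
  have hSy : S ⊆ Metric.ball y R := by
    intro z hz
    rw [Metric.mem_ball] at hz ⊢
    have h1 : dist z y ≤ dist z m + dist m y := dist_triangle _ _ _
    have h2 : dist m y = dist x y / 2 := by
      rw [dist_comm, dist_right_midpoint]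
      simp; ring
    nlinarith
  set Ix := ∫⁻ z in Metric.ball x R, edist (u x) (u z) with hIx
  set Iy := ∫⁻ z in Metric.ball y R, edist (u y) (u z) with hIy
  have hmx : Measurable fun z => edist (u x) (u z) := measurable_const.edist hu
  have hmy : Measurable fun z => edist (u y) (u z) := measurable_const.edist hu
  -- key inequality
  have key : edist (u x) (u y) * volume S ≤ Ix + Iy := by
    calc edist (u x) (u y) * volume S
        = ∫⁻ _ in S, edist (u x) (u y) := (setLIntegral_const _ _).symm
      _ ≤ ∫⁻ z in S, (edist (u x) (u z) + edist (u y) (u z)) := by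
          refine lintegral_mono fun z => ?_
          calc edist (u x) (u y) ≤ edist (u x) (u z) + edist (u z) (u y) :=
                edist_triangle _ _ _
            _ = edist (u x) (u z) + edist (u y) (u z) := by rw [edist_comm (u z)]
      _ = (∫⁻ z in S, edist (u x) (u z)) + ∫⁻ z in S, edist (u y) (u z) :=
          lintegral_add_left (hmx.comp measurable_id) _
      _ ≤ Ix + Iy := by
          gcongr
          · exact lintegral_mono_set hSx
          · exact lintegral_mono_set hSy
  -- volume comparison
  have hV0 : volume (Metric.ball x R) ≠ 0 :=
    (Metric.measure_ball_pos volume x hR).ne'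
  have hVt : volume (Metric.ball x R) ≠ ⊤ := measure_ball_lt_top.ne
  have hVy : volume (Metric.ball y R) = volume (Metric.ball x R) := by
    simp [Measure.addHaar_ball_center]
  have hVS : volume (Metric.ball x R) ≤ ENNReal.ofReal (2 ^ d) * volume S := by
    rw [hS, Measure.addHaar_ball volume x hRd, Measure.addHaar_ball volume m hR2,
      finrank_euclideanSpace_fin, ← mul_assoc, ← ENNReal.ofReal_mul (by positivity)]
    have : (2:ℝ) ^ d * (R / 2) ^ d = R ^ d := by
      rw [← mul_pow]; ring_nf
    rw [this]
  rw [hVy, ENNReal.div_add_div_same, ← mul_div_assoc,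
    ENNReal.le_div_iff_mul_le (Or.inl hV0) (Or.inl hVt)]
  calc edist (u x) (u y) * volume (Metric.ball x R)
      ≤ edist (u x) (u y) * (ENNReal.ofReal (2 ^ d) * volume S) := by gcongr
    _ = ENNReal.ofReal (2 ^ d) * (edist (u x) (u y) * volume S) := by ring
    _ ≤ ENNReal.ofReal (2 ^ d) * (Ix + Iy) := by gcongr
end

section
/- Let u : ℝ^d → N be Borel measurable. If for some R > 0 the quantity (1/|B^d_R|) ∬_{{(x,y) ∈ ℝ^d × ℝ^d : |x − y| ≤ R}} dist_N(u(x), u(y)) dx dy is finite, then lim_{r → 0⁺} (1/|B^d_r|) ∬_{{(x,y) ∈ ℝ^d × ℝ^d : |x − y| ≤ r}} dist_N(u(x), u(y)) dx dy = 0. -/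
open MeasureTheory Filter Metric Set
open scoped ENNReal Topology

private abbrev Eu (d : ℕ) := EuclideanSpace ℝ (Fin d)

set_option linter.unusedSectionVars false
set_option linter.unnecessarySeqFocus false

private lemma stmt9_translate_set {d : ℕ} {F : Set (EuclideanSpace ℝ (Fin d))}
    (hF : MeasurableSet F) (hfin : volume F ≠ ∞) :
    Tendsto (fun h : EuclideanSpace ℝ (Fin d) => volume (F \ ((· + h) ⁻¹' F)))
      (nhds 0) (nhds 0) := by
  rw [ENNReal.tendsto_nhds_zero]
  intro ε hε
  have hε2 : (ε / 2) ≠ 0 := (ENNReal.half_pos hε.ne').ne'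
  obtain ⟨K, hKF, hKc, hK⟩ := hF.exists_isCompact_diff_lt hfin hε2
  obtain ⟨U, hFU, hUo, _, hU⟩ := hF.exists_isOpen_diff_lt hfin hε2
  obtain ⟨δ, hδ, hthick⟩ := hKc.exists_thickening_subset_open hUo (hKF.trans hFU)
  filter_upwards [Metric.ball_mem_nhds (0 : EuclideanSpace ℝ (Fin d)) hδ] with h hh
  have hsub : F \ ((· + h) ⁻¹' F) ⊆ (F \ K) ∪ ((· + h) ⁻¹' (U \ F)) := by
    rintro x ⟨hxF, hxh⟩
    by_cases hxK : x ∈ K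
    · right
      refine ⟨hthick ?_, hxh⟩
      refine Metric.mem_thickening_iff.2 ⟨x, hxK, ?_⟩
      rw [dist_self_add_left]
      simpa using hh
    · exact Or.inl ⟨hxF, hxK⟩
  calc volume (F \ ((· + h) ⁻¹' F)) ≤ volume ((F \ K) ∪ ((· + h) ⁻¹' (U \ F))) :=
        measure_mono hsub
    _ ≤ volume (F \ K) + volume ((· + h) ⁻¹' (U \ F)) := measure_union_le _ _
    _ = volume (F \ K) + volume (U \ F) := by rw [measure_preimage_add_right]
    _ ≤ ε / 2 + ε / 2 := add_le_add hK.le hU.le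
    _ = ε := ENNReal.add_halves ε

private lemma stmt9_ind_mul_lintegral {α : Type*} [MeasurableSpace α] (μ : Measure α)
    {S : Set α} (hS : MeasurableSet S) (f : α → ℝ≥0∞) :
    ∫⁻ x, S.indicator (fun _ => (1 : ℝ≥0∞)) x * f x ∂μ = ∫⁻ x in S, f x ∂μ := by
  rw [← lintegral_indicator hS]
  refine lintegral_congr fun x => ?_
  by_cases hx : x ∈ S
  · rw [Set.indicator_of_mem hx, Set.indicator_of_mem hx, one_mul]
  · rw [Set.indicator_of_notMem hx, Set.indicator_of_notMem hx, zero_mul]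

section aux
variable {d : ℕ} {N : Type*} [MetricSpace N] [MeasurableSpace N] [BorelSpace N]
  [SecondCountableTopology N] (u : Eu d → N)

private lemma stmt9_Sle_meas (t : ℝ) :
    MeasurableSet {p : Eu d × Eu d | dist p.1 p.2 ≤ t} :=
  (isClosed_le (continuous_fst.dist continuous_snd) continuous_const).measurableSet

private lemma stmt9_Sy_meas (x : Eu d) (t : ℝ) :
    MeasurableSet {y : Eu d | dist x y ≤ t} :=
  (isClosed_le (continuous_const.dist continuous_id) continuous_const).measurableSet

private lemma stmt9_Tm_meas (a : ℝ) : MeasurableSet {x : Eu d | a < ‖x‖} :=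
  (isOpen_lt continuous_const continuous_norm).measurableSet

private lemma stmt9_ind_eq (t : ℝ) (x : Eu d) :
    (∫⁻ y, ({p : Eu d × Eu d | dist p.1 p.2 ≤ t}.indicator
        (fun p => edist (u p.1) (u p.2))) (x, y))
      = ∫⁻ y in {y | dist x y ≤ t}, edist (u x) (u y) := by
  rw [← lintegral_indicator (stmt9_Sy_meas x t)]
  refine lintegral_congr fun y => ?_
  by_cases hxy : dist x y ≤ t
  · rw [Set.indicator_of_mem (show (x, y) ∈ {p : Eu d × Eu d | dist p.1 p.2 ≤ t} from hxy),
      Set.indicator_of_mem (show y ∈ {y | dist x y ≤ t} from hxy)]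
  · rw [Set.indicator_of_notMem (show (x, y) ∉ {p : Eu d × Eu d | dist p.1 p.2 ≤ t} from hxy),
      Set.indicator_of_notMem (show y ∉ {y | dist x y ≤ t} from hxy)]

variable (hu : Measurable u)
include hu

private lemma stmt9_K_meas (t : ℝ) :
    Measurable fun x : Eu d => ∫⁻ y in {y | dist x y ≤ t}, edist (u x) (u y) := by
  have hGp : Measurable fun p : Eu d × Eu d => edist (u p.1) (u p.2) :=
    (hu.comp measurable_fst).edist (hu.comp measurable_snd)
  have h1 : Measurable fun x : Eu d => ∫⁻ y,
      ({p : Eu d × Eu d | dist p.1 p.2 ≤ t}.indicator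
        (fun p => edist (u p.1) (u p.2))) (x, y) :=
    (hGp.indicator (stmt9_Sle_meas t)).lintegral_prod_right'
  have : (fun x : Eu d => ∫⁻ y in {y | dist x y ≤ t}, edist (u x) (u y))
      = fun x : Eu d => ∫⁻ y, ({p : Eu d × Eu d | dist p.1 p.2 ≤ t}.indicator
        (fun p => edist (u p.1) (u p.2))) (x, y) := funext fun x => (stmt9_ind_eq u t x).symm
  rw [this]
  exact h1

private lemma stmt9_tail_est {R r m : ℝ} (hR : 0 < R) (hrR : r ≤ R / 2) :
    (∫⁻ x in {x : Eu d | m + R < ‖x‖}, ∫⁻ y in {y | dist x y ≤ r}, edist (u x) (u y))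
        * volume (ball (0 : Eu d) (R / 2))
      ≤ 2 * volume (closedBall (0 : Eu d) r) *
        ∫⁻ x in {x : Eu d | m < ‖x‖}, ∫⁻ y in {y | dist x y ≤ R}, edist (u x) (u y) := by
  have hGp : Measurable fun p : Eu d × Eu d => edist (u p.1) (u p.2) :=
    (hu.comp measurable_fst).edist (hu.comp measurable_snd)
  set W2 := volume (ball (0 : Eu d) (R / 2)) with hW2def
  set Br := volume (closedBall (0 : Eu d) r) with hBrdef
  set G : Eu d → Eu d → ℝ≥0∞ := fun x y => edist (u x) (u y) with hGdef
  set H : Eu d → ℝ≥0∞ := fun x => ∫⁻ y in {y | dist x y ≤ R}, G x y with hHdef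
  have hHmeas : Measurable H := stmt9_K_meas u hu R
  have hFrmeas : Measurable fun x : Eu d => ∫⁻ y in {y | dist x y ≤ r}, G x y :=
    stmt9_K_meas u hu r
  have hcball : ∀ x : Eu d, {y : Eu d | dist x y ≤ r} = closedBall x r := by
    intro x; ext y; simp [mem_closedBall, dist_comm]
  have hvolS : ∀ x : Eu d, volume {y : Eu d | dist x y ≤ r} = Br := by
    intro x; rw [hcball x, Measure.addHaar_closedBall_center]
  -- the K2 weight
  set K2 : Eu d → ℝ≥0∞ := fun y => ∫⁻ z,
      ({p : Eu d × Eu d | dist p.1 p.2 ≤ R}.indicator (fun p => edist (u p.1) (u p.2))) (z, y)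
        * ({x : Eu d | m < ‖x‖}.indicator (fun _ => (1 : ℝ≥0∞)) z) with hK2def
  have hK2integrand : Measurable fun q : Eu d × Eu d =>
      ({p : Eu d × Eu d | dist p.1 p.2 ≤ R}.indicator (fun p => edist (u p.1) (u p.2))) (q.2, q.1)
        * ({x : Eu d | m < ‖x‖}.indicator (fun _ => (1 : ℝ≥0∞)) q.2) :=
    ((hGp.indicator (stmt9_Sle_meas R)).comp measurable_swap).mul
      ((measurable_const.indicator (stmt9_Tm_meas m)).comp measurable_snd)
  have hK2meas : Measurable K2 := Measurable.lintegral_prod_right' hK2integrand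
  -- step 2 : pointwise chaining after y integration
  have step2 : ∀ x : Eu d, (∫⁻ y in {y | dist x y ≤ r}, G x y) * W2
      ≤ Br * H x + ∫⁻ y in {y | dist x y ≤ r}, ∫⁻ z in ball x (R / 2), G z y := by
    intro x
    have hz1 : Measurable fun z => G x z := measurable_const.edist hu
    have hptc : ∀ y, G x y * W2 ≤ (∫⁻ z in ball x (R / 2), G x z)
        + ∫⁻ z in ball x (R / 2), G z y := by
      intro y
      have he : G x y * W2 = ∫⁻ _ in ball x (R / 2), G x y := by
        rw [setLIntegral_const, Measure.addHaar_ball_center]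
      rw [he, ← lintegral_add_left hz1]
      exact lintegral_mono fun z => edist_triangle _ _ _
    calc (∫⁻ y in {y | dist x y ≤ r}, G x y) * W2
        = ∫⁻ y in {y | dist x y ≤ r}, G x y * W2 :=
          (lintegral_mul_const _ (measurable_const.edist hu)).symm
      _ ≤ ∫⁻ y in {y | dist x y ≤ r}, ((∫⁻ z in ball x (R / 2), G x z)
          + ∫⁻ z in ball x (R / 2), G z y) := lintegral_mono hptc
      _ = (∫⁻ _ in {y | dist x y ≤ r}, (∫⁻ z in ball x (R / 2), G x z))
          + ∫⁻ y in {y | dist x y ≤ r}, ∫⁻ z in ball x (R / 2), G z y :=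
          lintegral_add_left measurable_const _
      _ ≤ Br * H x + ∫⁻ y in {y | dist x y ≤ r}, ∫⁻ z in ball x (R / 2), G z y := by
          refine add_le_add ?_ le_rfl
          rw [setLIntegral_const, hvolS x, mul_comm]
          refine mul_le_mul_right ?_ _
          refine (lintegral_mono_set ?_)
          intro z hz
          have : dist z x < R / 2 := mem_ball.1 hz
          have : dist x z ≤ R := by rw [dist_comm]; linarith
          exact this
      -- note: H x = ∫⁻ y in {y | dist x y ≤ R}, G x y
  -- step 3 : the B3 term
  have hB3 : (∫⁻ x in {x : Eu d | m + R < ‖x‖},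
        ∫⁻ y in {y | dist x y ≤ r}, ∫⁻ z in ball x (R / 2), G z y)
      ≤ Br * ∫⁻ x in {x : Eu d | m < ‖x‖}, H x := by
    have hgmeas : Measurable fun x : Eu d => ∫⁻ y,
        ({p : Eu d × Eu d | dist p.1 p.2 ≤ r}.indicator (fun _ => (1 : ℝ≥0∞)) (x, y)) * K2 y :=
      Measurable.lintegral_prod_right'
        ((measurable_const.indicator (stmt9_Sle_meas r)).mul (hK2meas.comp measurable_snd))
    have hbound1 : ∀ x ∈ {x : Eu d | m + R < ‖x‖},
        (∫⁻ y in {y | dist x y ≤ r}, ∫⁻ z in ball x (R / 2), G z y)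
        ≤ ∫⁻ y, ({p : Eu d × Eu d | dist p.1 p.2 ≤ r}.indicator (fun _ => (1 : ℝ≥0∞)) (x, y))
            * K2 y := by
      intro x hx
      rw [← lintegral_indicator (stmt9_Sy_meas x r)]
      refine lintegral_mono fun y => ?_
      by_cases hxy : dist x y ≤ r
      · rw [Set.indicator_of_mem (show y ∈ {y | dist x y ≤ r} from hxy),
          Set.indicator_of_mem (show (x, y) ∈ {p : Eu d × Eu d | dist p.1 p.2 ≤ r} from hxy),
          one_mul, hK2def]
        rw [← lintegral_indicator measurableSet_ball]
        refine lintegral_mono fun z => ?_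
        by_cases hz : z ∈ ball x (R / 2)
        · rw [Set.indicator_of_mem hz]
          have hzx : dist z x < R / 2 := mem_ball.1 hz
          have h1 : dist z y ≤ R := by
            have h3 : dist z y ≤ dist z x + dist x y := dist_triangle _ _ _
            linarith
          have h2 : m < ‖z‖ := by
            have h4 : ‖x‖ - ‖z‖ ≤ ‖x - z‖ := norm_sub_norm_le _ _
            have h5 : ‖x - z‖ = dist x z := (dist_eq_norm _ _).symm
            have h6 : dist x z < R / 2 := by rw [dist_comm]; exact hzx
            have h7 : m + R < ‖x‖ := hx
            linarith
          rw [Set.indicator_of_mem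
              (show ((z, y) : Eu d × Eu d) ∈ {p : Eu d × Eu d | dist p.1 p.2 ≤ R} from h1),
            Set.indicator_of_mem (show z ∈ {x : Eu d | m < ‖x‖} from h2), mul_one]
        · rw [Set.indicator_of_notMem hz]
          exact zero_le
      · rw [Set.indicator_of_notMem (show y ∉ {y | dist x y ≤ r} from hxy),
          Set.indicator_of_notMem (show (x, y) ∉ {p : Eu d × Eu d | dist p.1 p.2 ≤ r} from hxy),
          zero_mul]
    calc (∫⁻ x in {x : Eu d | m + R < ‖x‖},
          ∫⁻ y in {y | dist x y ≤ r}, ∫⁻ z in ball x (R / 2), G z y)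
        ≤ ∫⁻ x in {x : Eu d | m + R < ‖x‖}, ∫⁻ y,
            ({p : Eu d × Eu d | dist p.1 p.2 ≤ r}.indicator (fun _ => (1 : ℝ≥0∞)) (x, y))
              * K2 y := setLIntegral_mono hgmeas hbound1
      _ ≤ ∫⁻ x, ∫⁻ y,
            ({p : Eu d × Eu d | dist p.1 p.2 ≤ r}.indicator (fun _ => (1 : ℝ≥0∞)) (x, y))
              * K2 y := setLIntegral_le_lintegral _ _
      _ = ∫⁻ y, ∫⁻ x,
            ({p : Eu d × Eu d | dist p.1 p.2 ≤ r}.indicator (fun _ => (1 : ℝ≥0∞)) (x, y))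
              * K2 y := lintegral_lintegral_swap
            (((measurable_const.indicator (stmt9_Sle_meas r)).mul
              (hK2meas.comp measurable_snd)).aemeasurable)
      _ = ∫⁻ y, Br * K2 y := by
          refine lintegral_congr fun y => ?_
          have hset : {x : Eu d | dist x y ≤ r} = closedBall y r := rfl
          calc (∫⁻ x, ({p : Eu d × Eu d | dist p.1 p.2 ≤ r}.indicator
                (fun _ => (1 : ℝ≥0∞)) (x, y)) * K2 y)
              = ∫⁻ x, ({x : Eu d | dist x y ≤ r}.indicator (fun _ => (1 : ℝ≥0∞)) x) * K2 y := by
                refine lintegral_congr fun x => ?_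
                by_cases hxy : dist x y ≤ r
                · rw [Set.indicator_of_mem (show (x, y) ∈
                      {p : Eu d × Eu d | dist p.1 p.2 ≤ r} from hxy),
                    Set.indicator_of_mem (show x ∈ {x | dist x y ≤ r} from hxy)]
                · rw [Set.indicator_of_notMem (show (x, y) ∉
                      {p : Eu d × Eu d | dist p.1 p.2 ≤ r} from hxy),
                    Set.indicator_of_notMem (show x ∉ {x | dist x y ≤ r} from hxy)]
            _ = (∫⁻ x, ({x : Eu d | dist x y ≤ r}.indicator (fun _ => (1 : ℝ≥0∞)) x)) * K2 y :=
                lintegral_mul_const _ (measurable_const.indicator (hset ▸ measurableSet_closedBall))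
            _ = volume {x : Eu d | dist x y ≤ r} * K2 y := by
                rw [lintegral_indicator (hset ▸ measurableSet_closedBall), setLIntegral_one]
            _ = Br * K2 y := by
                rw [hset, Measure.addHaar_closedBall_center]
      _ = Br * ∫⁻ y, K2 y := by
          rw [← lintegral_const_mul Br hK2meas]
      _ = Br * ∫⁻ x in {x : Eu d | m < ‖x‖}, H x := by
          congr 1
          calc (∫⁻ y, K2 y)
              = ∫⁻ z, ∫⁻ y, ({p : Eu d × Eu d | dist p.1 p.2 ≤ R}.indicator
                  (fun p => edist (u p.1) (u p.2))) (z, y)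
                  * ({x : Eu d | m < ‖x‖}.indicator (fun _ => (1 : ℝ≥0∞)) z) :=
                lintegral_lintegral_swap hK2integrand.aemeasurable
            _ = ∫⁻ z, ({x : Eu d | m < ‖x‖}.indicator (fun _ => (1 : ℝ≥0∞)) z) * H z := by
                refine lintegral_congr fun z => ?_
                rw [lintegral_mul_const _
                  (show Measurable fun y : Eu d =>
                    ({p : Eu d × Eu d | dist p.1 p.2 ≤ R}.indicator
                      (fun p => edist (u p.1) (u p.2))) (z, y) from
                    (hGp.indicator (stmt9_Sle_meas R)).comp measurable_prodMk_left),
                  stmt9_ind_eq u R z, mul_comm]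
            _ = ∫⁻ x in {x : Eu d | m < ‖x‖}, H x :=
                stmt9_ind_mul_lintegral volume (stmt9_Tm_meas m) H
  -- assemble
  have hsub : {x : Eu d | m + R < ‖x‖} ⊆ {x : Eu d | m < ‖x‖} := by
    intro x hx
    have : m + R < ‖x‖ := hx
    have : m < ‖x‖ := by linarith
    exact this
  calc (∫⁻ x in {x : Eu d | m + R < ‖x‖}, ∫⁻ y in {y | dist x y ≤ r}, G x y) * W2
      = ∫⁻ x in {x : Eu d | m + R < ‖x‖}, (∫⁻ y in {y | dist x y ≤ r}, G x y) * W2 :=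
        (lintegral_mul_const _ hFrmeas).symm
    _ ≤ ∫⁻ x in {x : Eu d | m + R < ‖x‖},
        (Br * H x + ∫⁻ y in {y | dist x y ≤ r}, ∫⁻ z in ball x (R / 2), G z y) :=
        lintegral_mono fun x => step2 x
    _ = Br * (∫⁻ x in {x : Eu d | m + R < ‖x‖}, H x)
        + ∫⁻ x in {x : Eu d | m + R < ‖x‖},
            ∫⁻ y in {y | dist x y ≤ r}, ∫⁻ z in ball x (R / 2), G z y := by
        rw [lintegral_add_left (hHmeas.const_mul Br), lintegral_const_mul Br hHmeas]
    _ ≤ Br * (∫⁻ x in {x : Eu d | m < ‖x‖}, H x)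
        + Br * ∫⁻ x in {x : Eu d | m < ‖x‖}, H x := by
        refine add_le_add (mul_le_mul_right (lintegral_mono_set hsub) _) hB3
    _ = 2 * Br * ∫⁻ x in {x : Eu d | m < ‖x‖}, H x := by ring

end aux

private lemma stmt9_basepoint {d : ℕ} {N : Type*} [MetricSpace N]
    (u : Eu d → N) {R : ℝ} (hR : 0 < R)
    (hae : ∀ᵐ x : Eu d,
      (∫⁻ y in {y | dist x y ≤ R}, edist (u x) (u y)) < ∞)
    (ρ : ℝ) :
    (∫⁻ x in closedBall (0 : Eu d) ρ, edist (u x) (u 0)) ≠ ∞ := by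
  have hR4 : 0 < R / 4 := by linarith
  -- local claim
  have loc : ∀ z : Eu d, ∃ c : N, (∫⁻ y in ball z (R / 4), edist (u y) c) ≠ ∞ := by
    intro z
    have hball : volume (ball z (R / 4)) ≠ 0 := (measure_ball_pos _ _ hR4).ne'
    have hbad : volume {x : Eu d | ¬ (∫⁻ y in {y | dist x y ≤ R}, edist (u x) (u y)) < ∞} = 0 :=
      ae_iff.1 hae
    have hpos : volume (ball z (R / 4) ∩
        {x : Eu d | (∫⁻ y in {y | dist x y ≤ R}, edist (u x) (u y)) < ∞}) ≠ 0 := by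
      intro h0
      apply hball
      have : ball z (R / 4) ⊆ (ball z (R / 4) ∩ {x : Eu d | (∫⁻ y in {y | dist x y ≤ R}, edist (u x) (u y)) < ∞}) ∪ {x : Eu d | ¬ (∫⁻ y in {y | dist x y ≤ R}, edist (u x) (u y)) < ∞} := by
        intro x hx
        by_cases hxg : (∫⁻ y in {y | dist x y ≤ R}, edist (u x) (u y)) < ∞
        · exact Or.inl ⟨hx, hxg⟩
        · exact Or.inr hxg
      refine le_antisymm ?_ (zero_le)
      calc volume (ball z (R / 4)) ≤ _ + _ := (measure_mono this).trans (measure_union_le _ _)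
        _ = 0 := by rw [h0, hbad, add_zero]
    obtain ⟨x₀, hx₀mem, hx₀⟩ := nonempty_of_measure_ne_zero hpos
    refine ⟨u x₀, ?_⟩
    have hsub : ball z (R / 4) ⊆ {y | dist x₀ y ≤ R} := by
      intro y hy
      have h1 : dist y z < R / 4 := mem_ball.1 hy
      have h2 : dist x₀ z < R / 4 := mem_ball.1 hx₀mem
      have : dist x₀ y ≤ dist x₀ z + dist z y := dist_triangle _ _ _
      rw [dist_comm z y] at this
      exact le_trans this (by linarith)
    have : (∫⁻ y in ball z (R / 4), edist (u y) (u x₀))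
        ≤ ∫⁻ y in {y | dist x₀ y ≤ R}, edist (u x₀) (u y) := by
      refine le_trans (le_of_eq ?_) (lintegral_mono_set hsub)
      exact lintegral_congr fun y => by rw [edist_comm]
    exact (lt_of_le_of_lt this hx₀).ne
  -- cover the closed ball
  obtain ⟨t, -, htfin, hcover⟩ :=
    (isCompact_closedBall (0 : Eu d) ρ).finite_cover_balls hR4
  haveI : Countable t := htfin.countable
  have hbound : (∫⁻ x in closedBall (0 : Eu d) ρ, edist (u x) (u 0))
      ≤ ∑' z : t, ∫⁻ x in ball (z : Eu d) (R / 4), edist (u x) (u 0) := by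
    refine le_trans (lintegral_mono_set ?_) (lintegral_iUnion_le _ _)
    simpa [Set.iUnion_coe_set] using hcover
  have hfinsum : (∑' z : t, ∫⁻ x in ball (z : Eu d) (R / 4), edist (u x) (u 0)) ≠ ∞ := by
    haveI : Fintype t := htfin.fintype
    rw [tsum_fintype]
    refine (ENNReal.sum_lt_top.2 fun z _ => ?_).ne
    obtain ⟨c, hc⟩ := loc (z : Eu d)
    have : (∫⁻ x in ball (z : Eu d) (R / 4), edist (u x) (u 0))
        ≤ (∫⁻ x in ball (z : Eu d) (R / 4), edist (u x) c)
          + (∫⁻ x in ball (z : Eu d) (R / 4), (fun _ => edist c (u 0)) x) := by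
      rw [← lintegral_add_right _ measurable_const]
      exact lintegral_mono fun x => edist_triangle _ _ _
    refine lt_of_le_of_lt this (ENNReal.add_lt_top.2 ⟨hc.lt_top, ?_⟩)
    rw [setLIntegral_const]
    exact ENNReal.mul_lt_top (edist_lt_top _ _) measure_ball_lt_top
  exact (hbound.trans_lt hfinsum.lt_top).ne

private lemma stmt9_translate_cont {d : ℕ} {N : Type*} [MetricSpace N]
    [TopologicalSpace.SeparableSpace N] [MeasurableSpace N] [BorelSpace N]
    (u : Eu d → N) (hu : Measurable u) (M : ℝ) {R : ℝ} (hR : 0 < R)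
    (hloc : (∫⁻ x in closedBall (0 : Eu d) (M + R), edist (u x) (u 0)) ≠ ∞) :
    Tendsto (fun h : Eu d => ∫⁻ x in closedBall (0 : Eu d) M, edist (u x) (u (x + h)))
      (nhds 0) (nhds 0) := by
  classical
  haveI : Nonempty N := ⟨u 0⟩
  haveI : SecondCountableTopology N := UniformSpace.secondCountable_of_separable N
  rw [ENNReal.tendsto_nhds_zero]
  intro ε hε
  rcases eq_top_or_lt_top ε with rfl | hεtop
  · filter_upwards with h using le_top
  set ε₁ : ℝ≥0∞ := ε / 6 with hε₁def
  have hε₁pos : 0 < ε₁ := ENNReal.div_pos hε.ne' (by norm_num)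
  set B : Set (Eu d) := closedBall (0 : Eu d) (M + R) with hBdef
  have hBmeas : MeasurableSet B := measurableSet_closedBall
  have hV : volume B ≠ ∞ := measure_closedBall_lt_top.ne
  have hMB : closedBall (0 : Eu d) M ⊆ B := closedBall_subset_closedBall (by linarith)
  -- choose η
  obtain ⟨η, hη0, hηle⟩ : ∃ η : ℝ, 0 < η ∧ ENNReal.ofReal η * volume B ≤ ε₁ := by
    rcases eq_or_ne (volume B) 0 with hV0 | hV0
    · exact ⟨1, one_pos, by simp [hV0]⟩
    · set a := min (ε₁ / volume B) 1 with ha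
      have ha0 : 0 < a := lt_min (ENNReal.div_pos hε₁pos.ne' hV) one_pos
      have hatop : a ≠ ∞ := ((min_le_right _ _).trans_lt ENNReal.one_lt_top).ne
      refine ⟨a.toReal, ENNReal.toReal_pos ha0.ne' hatop, ?_⟩
      rw [ENNReal.ofReal_toReal hatop]
      exact ENNReal.mul_le_of_le_div (min_le_left _ _)
  -- dense sequence and index function
  set c : ℕ → N := TopologicalSpace.denseSeq N with hcdef
  have hc : DenseRange c := TopologicalSpace.denseRange_denseSeq N
  have hex : ∀ x : Eu d, ∃ i, dist (u x) (c i) < η := fun x => hc.exists_dist_lt (u x) hη0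
  set j : Eu d → ℕ := fun x => Nat.find (hex x) with hjdef
  have hjmeas : Measurable j := by
    refine measurable_find hex fun i => ?_
    exact hu measurableSet_ball
  have hjspec : ∀ x, dist (u x) (c (j x)) < η := fun x => Nat.find_spec (hex x)
  set w : Eu d → ℝ≥0∞ := fun x => edist (u x) (u 0) with hwdef
  have hwmeas : Measurable w := hu.edist measurable_const
  -- Step A: choose the cutoff k
  have htend : Tendsto (fun k => ∫⁻ x in B, ({x | k < j x}.indicator w) x) atTop (𝓝 0) := by
    have key := tendsto_lintegral_of_dominated_convergence (μ := volume.restrict B)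
      (F := fun k => fun x => ({x | k < j x}.indicator w) x) (f := fun _ => 0) w
      (fun k => hwmeas.indicator (hjmeas measurableSet_Ioi)) (fun k => ?_) (by rwa [hBdef]) ?_
    · simpa using key
    · exact Filter.Eventually.of_forall fun x => Set.indicator_le_self _ _ x
    · refine Filter.Eventually.of_forall fun x => ?_
      refine Filter.Tendsto.congr' ?_ tendsto_const_nhds
      filter_upwards [Filter.eventually_ge_atTop (j x)] with k hk
      exact (Set.indicator_of_notMem (by simpa using hk) _).symm
  obtain ⟨k, hk⟩ : ∃ k : ℕ, (∫⁻ x in B, ({x | k < j x}.indicator w) x) ≤ ε₁ :=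
    ((htend.eventually_lt_const hε₁pos).mono fun k h => h.le).exists
  -- capped objects
  set c' : ℕ → N := fun i => if i ≤ k then c i else u 0 with hc'def
  set jc : Eu d → ℕ := fun x => if j x ≤ k then j x else k + 1 with hjcdef
  have hjcmeas : Measurable jc := Measurable.ite (hjmeas measurableSet_Iic) hjmeas measurable_const
  set s : Eu d → N := fun x => c' (jc x) with hsdef
  have hsmeas : Measurable s := Measurable.comp (g := c') (f := jc) measurable_from_top hjcmeas
  have hjclt : ∀ x, jc x < k + 2 := by
    intro x
    by_cases hx : j x ≤ k <;> simp [hjcdef, hx] <;> omega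
  -- Step A bound
  have hA : (∫⁻ x in B, edist (u x) (s x)) ≤ 2 * ε₁ := by
    have hpt : ∀ x, edist (u x) (s x) ≤ ENNReal.ofReal η + ({x | k < j x}.indicator w) x := by
      intro x
      by_cases hx : j x ≤ k
      · have hs : s x = c (j x) := by simp [hsdef, hc'def, hjcdef, hx]
        rw [hs]
        refine le_add_right ?_
        rw [edist_dist]
        exact ENNReal.ofReal_le_ofReal (hjspec x).le
      · have hs : s x = u 0 := by simp [hsdef, hc'def, hjcdef, hx]
        rw [hs, Set.indicator_of_mem (by simpa using not_le.1 hx)]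
        exact le_add_left le_rfl
    calc (∫⁻ x in B, edist (u x) (s x))
        ≤ ∫⁻ x in B, (ENNReal.ofReal η + ({x | k < j x}.indicator w) x) :=
          lintegral_mono hpt
      _ = ENNReal.ofReal η * volume B + ∫⁻ x in B, ({x | k < j x}.indicator w) x := by
          rw [lintegral_add_left measurable_const, setLIntegral_const]
      _ ≤ ε₁ + ε₁ := add_le_add hηle hk
      _ = 2 * ε₁ := (two_mul ε₁).symm
  -- Step B : middle term
  set Efam : ℕ → Set (Eu d) := fun i => jc ⁻¹' {i} with hEdef
  have hEmeas : ∀ i, MeasurableSet (Efam i) := fun i => hjcmeas (measurableSet_singleton i)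
  set Ffam : ℕ → Set (Eu d) := fun i => Efam i ∩ B with hFdef
  have hFmeas : ∀ i, MeasurableSet (Ffam i) := fun i => (hEmeas i).inter hBmeas
  have hFfin : ∀ i, volume (Ffam i) ≠ ∞ :=
    fun i => ((measure_mono Set.inter_subset_right).trans_lt hV.lt_top).ne
  set C : ℝ≥0∞ := ∑ i ∈ Finset.range (k + 2), ∑ l ∈ Finset.range (k + 2), edist (c' i) (c' l)
    with hCdef
  have hCtop : C ≠ ∞ :=
    (ENNReal.sum_lt_top.2 fun i _ => (ENNReal.sum_lt_top.2 fun l _ => edist_lt_top _ _)).ne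
  have hCle : ∀ i l, i < k + 2 → l < k + 2 → edist (c' i) (c' l) ≤ C := by
    intro i l hi hl
    calc edist (c' i) (c' l)
        ≤ ∑ l' ∈ Finset.range (k + 2), edist (c' i) (c' l') :=
          Finset.single_le_sum (f := fun l' => edist (c' i) (c' l'))
            (fun _ _ => zero_le) (Finset.mem_range.2 hl)
      _ ≤ C := Finset.single_le_sum (f := fun i' => ∑ l' ∈ Finset.range (k + 2), edist (c' i') (c' l'))
          (fun _ _ => zero_le) (Finset.mem_range.2 hi)
  have hmid : ∀ h : Eu d, (∫⁻ x in closedBall (0 : Eu d) M, edist (s x) (s (x + h)))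
      ≤ ∑ i ∈ Finset.range (k + 2), C * volume (Ffam i \ ((· + h) ⁻¹' (Ffam i))) := by
    intro h
    have hpt : ∀ x ∈ closedBall (0 : Eu d) M, edist (s x) (s (x + h)) ≤
        ∑ i ∈ Finset.range (k + 2),
          (Ffam i \ ((· + h) ⁻¹' (Ffam i))).indicator (fun _ => C) x := by
      intro x hx
      by_cases hxx : jc x = jc (x + h)
      · have : s x = s (x + h) := by rw [hsdef]; simp only []; rw [hxx]
        rw [this, edist_self]
        exact zero_le
      · have hxF : x ∈ Ffam (jc x) \ ((· + h) ⁻¹' (Ffam (jc x))) := by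
          constructor
          · exact ⟨rfl, hMB hx⟩
          · intro hmem
            exact hxx (hmem.1).symm
        calc edist (s x) (s (x + h)) ≤ C := hCle _ _ (hjclt x) (hjclt (x + h))
          _ = (Ffam (jc x) \ ((· + h) ⁻¹' (Ffam (jc x)))).indicator (fun _ => C) x := by
              rw [Set.indicator_of_mem hxF]
          _ ≤ _ := Finset.single_le_sum (f := fun i =>
                (Ffam i \ ((· + h) ⁻¹' (Ffam i))).indicator (fun _ => C) x)
              (fun _ _ => zero_le) (Finset.mem_range.2 (hjclt x))
    have hmeasdiff : ∀ i, MeasurableSet (Ffam i \ ((· + h) ⁻¹' (Ffam i))) :=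
      fun i => (hFmeas i).diff ((hFmeas i).preimage (measurable_add_const h))
    calc (∫⁻ x in closedBall (0 : Eu d) M, edist (s x) (s (x + h)))
        ≤ ∫⁻ x in closedBall (0 : Eu d) M, ∑ i ∈ Finset.range (k + 2),
            (Ffam i \ ((· + h) ⁻¹' (Ffam i))).indicator (fun _ => C) x :=
          setLIntegral_mono (Finset.measurable_sum _ fun i _ => measurable_const.indicator (hmeasdiff i)) hpt
      _ ≤ ∫⁻ x, ∑ i ∈ Finset.range (k + 2),
            (Ffam i \ ((· + h) ⁻¹' (Ffam i))).indicator (fun _ => C) x :=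
          setLIntegral_le_lintegral _ _
      _ = ∑ i ∈ Finset.range (k + 2), ∫⁻ x,
            (Ffam i \ ((· + h) ⁻¹' (Ffam i))).indicator (fun _ => C) x :=
          lintegral_finset_sum _ fun i _ => measurable_const.indicator (hmeasdiff i)
      _ = ∑ i ∈ Finset.range (k + 2), C * volume (Ffam i \ ((· + h) ⁻¹' (Ffam i))) := by
          refine Finset.sum_congr rfl fun i _ => ?_
          rw [lintegral_indicator (hmeasdiff i), setLIntegral_const]
  have hmid0 : Tendsto (fun h : Eu d => ∑ i ∈ Finset.range (k + 2),
      C * volume (Ffam i \ ((· + h) ⁻¹' (Ffam i)))) (𝓝 0) (𝓝 0) := by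
    have hterm : ∀ i ∈ Finset.range (k + 2), Tendsto (fun h : Eu d =>
        C * volume (Ffam i \ ((· + h) ⁻¹' (Ffam i)))) (𝓝 0) (𝓝 0) := by
      intro i _
      have := ENNReal.Tendsto.const_mul (stmt9_translate_set (hFmeas i) (hFfin i)) (Or.inr hCtop)
      simpa using this
    have := tendsto_finset_sum (Finset.range (k + 2)) hterm
    simpa using this
  -- Step C : assemble
  have h1 := hmid0.eventually_lt_const hε₁pos
  filter_upwards [h1, Metric.closedBall_mem_nhds (0 : Eu d) hR] with h hh1 hh2
  have hterm2 : (∫⁻ x in closedBall (0 : Eu d) M, edist (s x) (s (x + h))) ≤ ε₁ :=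
    (hmid h).trans hh1.le
  have hterm1 : (∫⁻ x in closedBall (0 : Eu d) M, edist (u x) (s x)) ≤ 2 * ε₁ :=
    (lintegral_mono_set hMB).trans hA
  have hterm3 : (∫⁻ x in closedBall (0 : Eu d) M, edist (s (x + h)) (u (x + h))) ≤ 2 * ε₁ := by
    have heq : (∫⁻ x in closedBall (0 : Eu d) M, edist (s (x + h)) (u (x + h)))
        = ∫⁻ y in closedBall h M, edist (s y) (u y) := by
      rw [← lintegral_indicator measurableSet_closedBall,
        ← lintegral_indicator measurableSet_closedBall]
      rw [← lintegral_add_right_eq_self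
        (fun y => (closedBall h M).indicator (fun y => edist (s y) (u y)) y) h]
      congr 1
      ext x
      have hmem : x + h ∈ closedBall h M ↔ x ∈ closedBall (0 : Eu d) M := by
        simp [mem_closedBall, dist_eq_norm]
      by_cases hx : x ∈ closedBall (0 : Eu d) M
      · rw [Set.indicator_of_mem (hmem.2 hx), Set.indicator_of_mem hx]
      · rw [Set.indicator_of_notMem (fun hmem' => hx (hmem.1 hmem')),
          Set.indicator_of_notMem hx]
    rw [heq]
    have hsub2 : closedBall h M ⊆ B := by
      intro y hy
      rw [hBdef, mem_closedBall]
      calc dist y 0 ≤ dist y h + dist h 0 := dist_triangle _ _ _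
        _ ≤ M + R := add_le_add (mem_closedBall.1 hy) (by simpa [mem_closedBall] using hh2)
    calc (∫⁻ y in closedBall h M, edist (s y) (u y))
        ≤ ∫⁻ y in B, edist (s y) (u y) := lintegral_mono_set hsub2
      _ = ∫⁻ y in B, edist (u y) (s y) := lintegral_congr fun y => edist_comm _ _
      _ ≤ 2 * ε₁ := hA
  have hsplit : (∫⁻ x in closedBall (0 : Eu d) M, edist (u x) (u (x + h)))
      ≤ (∫⁻ x in closedBall (0 : Eu d) M, edist (u x) (s x))
        + (∫⁻ x in closedBall (0 : Eu d) M, edist (s x) (s (x + h)))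
        + (∫⁻ x in closedBall (0 : Eu d) M, edist (s (x + h)) (u (x + h))) := by
    have e2 : Measurable fun x : Eu d => s (x + h) := hsmeas.comp (measurable_add_const h)
    rw [← lintegral_add_left (hu.edist hsmeas), ← lintegral_add_left
      (f := fun x => edist (u x) (s x) + edist (s x) (s (x + h))) ((hu.edist hsmeas).add (hsmeas.edist e2))]
    exact lintegral_mono fun x => edist_triangle4 _ _ _ _
  calc (∫⁻ x in closedBall (0 : Eu d) M, edist (u x) (u (x + h)))
      ≤ 2 * ε₁ + ε₁ + 2 * ε₁ := hsplit.trans (add_le_add (add_le_add hterm1 hterm2) hterm3)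
    _ = 5 * ε₁ := by ring
    _ ≤ 6 * ε₁ := mul_le_mul_left (by norm_num) _
    _ = ε := by
        rw [hε₁def, ENNReal.mul_div_cancel' (by norm_num) (by norm_num)]

/-- If for some `R > 0` the quantity `(1/|B^d_R|) ∬_{|x-y| ≤ R} dist (u x) (u y)` is
finite, then `(1/|B^d_r|) ∬_{|x-y| ≤ r} dist (u x) (u y) → 0` as `r → 0⁺`. -/
theorem stmt_9 (d : ℕ) (hd : 1 ≤ d)
    {N : Type*} [MetricSpace N] [CompleteSpace N] [TopologicalSpace.SeparableSpace N]
    [MeasurableSpace N] [BorelSpace N]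
    (u : EuclideanSpace ℝ (Fin d) → N) (hu : Measurable u)
    (R : ℝ) (hR : 0 < R)
    (hfin : (∫⁻ p in {p : EuclideanSpace ℝ (Fin d) × EuclideanSpace ℝ (Fin d) |
          dist p.1 p.2 ≤ R}, edist (u p.1) (u p.2))
        / volume (Metric.ball (0 : EuclideanSpace ℝ (Fin d)) R) < ⊤) :
    Tendsto
      (fun r : ℝ =>
        (∫⁻ p in {p : EuclideanSpace ℝ (Fin d) × EuclideanSpace ℝ (Fin d) |
            dist p.1 p.2 ≤ r}, edist (u p.1) (u p.2))
          / volume (Metric.ball (0 : EuclideanSpace ℝ (Fin d)) r))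
      (nhdsWithin 0 (Set.Ioi 0)) (nhds 0) := by
  classical
  haveI : SecondCountableTopology N := UniformSpace.secondCountable_of_separable N
  haveI : Nontrivial (EuclideanSpace ℝ (Fin d)) := by
    haveI : Nonempty (Fin d) := ⟨⟨0, by omega⟩⟩
    infer_instance
  have hGp : Measurable fun p : EuclideanSpace ℝ (Fin d) × EuclideanSpace ℝ (Fin d) =>
      edist (u p.1) (u p.2) := (hu.comp measurable_fst).edist (hu.comp measurable_snd)
  -- double integral representation
  have hdouble : ∀ t : ℝ,
      (∫⁻ p in {p : EuclideanSpace ℝ (Fin d) × EuclideanSpace ℝ (Fin d) |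
          dist p.1 p.2 ≤ t}, edist (u p.1) (u p.2))
        = ∫⁻ x, ∫⁻ y in {y | dist x y ≤ t}, edist (u x) (u y) := by
    intro t
    rw [← lintegral_indicator (stmt9_Sle_meas t), Measure.volume_eq_prod,
      lintegral_prod _ ((hGp.indicator (stmt9_Sle_meas t)).aemeasurable)]
    exact lintegral_congr fun x => stmt9_ind_eq u t x
  have hHmeas : Measurable fun x : EuclideanSpace ℝ (Fin d) =>
      ∫⁻ y in {y | dist x y ≤ R}, edist (u x) (u y) := stmt9_K_meas u hu R
  have hΦR : (∫⁻ x : EuclideanSpace ℝ (Fin d),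
      ∫⁻ y in {y | dist x y ≤ R}, edist (u x) (u y)) ≠ ∞ := by
    rw [← hdouble R]
    intro htop
    rw [htop, ENNReal.top_div_of_ne_top measure_ball_lt_top.ne] at hfin
    exact (lt_irrefl _ hfin)
  have hae : ∀ᵐ x : EuclideanSpace ℝ (Fin d),
      (∫⁻ y in {y | dist x y ≤ R}, edist (u x) (u y)) < ∞ := ae_lt_top hHmeas hΦR
  -- tail tendsto
  have hT : Tendsto (fun n : ℕ => ∫⁻ x in {x : EuclideanSpace ℝ (Fin d) | (n : ℝ) < ‖x‖},
      ∫⁻ y in {y | dist x y ≤ R}, edist (u x) (u y)) atTop (𝓝 0) := by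
    set ν : Measure (EuclideanSpace ℝ (Fin d)) :=
      volume.withDensity (fun x => ∫⁻ y in {y | dist x y ≤ R}, edist (u x) (u y)) with hν
    have heq : ∀ n : ℕ, (∫⁻ x in {x : EuclideanSpace ℝ (Fin d) | (n : ℝ) < ‖x‖},
        ∫⁻ y in {y | dist x y ≤ R}, edist (u x) (u y)) = ν {x | (n : ℝ) < ‖x‖} := by
      intro n
      rw [hν, withDensity_apply _ (stmt9_Tm_meas _)]
    have h2 : Tendsto (fun n : ℕ => ν {x : EuclideanSpace ℝ (Fin d) | (n : ℝ) < ‖x‖}) atTop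
        (𝓝 (ν (⋂ n : ℕ, {x : EuclideanSpace ℝ (Fin d) | (n : ℝ) < ‖x‖}))) := by
      refine tendsto_measure_iInter_atTop (fun n => (stmt9_Tm_meas _).nullMeasurableSet) ?_ ⟨0, ?_⟩
      · intro a b hab x hx
        have : (a : ℝ) ≤ b := by exact_mod_cast hab
        exact lt_of_le_of_lt this hx
      · refine ((measure_mono (Set.subset_univ _)).trans_lt ?_).ne
        have : ν Set.univ = ∫⁻ x, ∫⁻ y in {y | dist x y ≤ R}, edist (u x) (u y) := by
          rw [hν, withDensity_apply _ MeasurableSet.univ, Measure.restrict_univ]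
        rw [this]
        exact hΦR.lt_top
    have hempty : (⋂ n : ℕ, {x : EuclideanSpace ℝ (Fin d) | (n : ℝ) < ‖x‖}) = ∅ := by
      ext x
      simp only [Set.mem_iInter, Set.mem_setOf_eq, Set.mem_empty_iff_false, iff_false, not_forall,
        not_lt]
      obtain ⟨n, hn⟩ := exists_nat_gt ‖x‖
      exact ⟨n, hn.le⟩
    rw [hempty, measure_empty] at h2
    exact Tendsto.congr (fun n => (heq n).symm) h2
  -- main epsilon argument
  rw [ENNReal.tendsto_nhds_zero]
  intro ε hε
  have hW2pos : volume (ball (0 : EuclideanSpace ℝ (Fin d)) (R / 2)) ≠ 0 :=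
    (measure_ball_pos _ _ (by linarith)).ne'
  have hW2top : volume (ball (0 : EuclideanSpace ℝ (Fin d)) (R / 2)) ≠ ∞ :=
    measure_ball_lt_top.ne
  have hthr : (0 : ℝ≥0∞) < ε / 2 / 2 * volume (ball (0 : EuclideanSpace ℝ (Fin d)) (R / 2)) :=
    ENNReal.mul_pos (ENNReal.div_pos (ENNReal.div_pos hε.ne' (by norm_num)).ne' (by norm_num)).ne'
      hW2pos
  obtain ⟨n₀, hn₀⟩ : ∃ n : ℕ, (∫⁻ x in {x : EuclideanSpace ℝ (Fin d) | (n : ℝ) < ‖x‖},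
      ∫⁻ y in {y | dist x y ≤ R}, edist (u x) (u y))
        ≤ ε / 2 / 2 * volume (ball (0 : EuclideanSpace ℝ (Fin d)) (R / 2)) :=
    ((hT.eventually_lt_const hthr).mono fun n h => h.le).exists
  have hloc := stmt9_basepoint u hR hae (((n₀ : ℝ) + R) + R)
  have hcont := stmt9_translate_cont u hu ((n₀ : ℝ) + R) hR hloc
  have hev := hcont.eventually_lt_const (show (0 : ℝ≥0∞) < ε / 2 from
    ENNReal.div_pos hε.ne' (by norm_num))
  obtain ⟨δ, hδpos, hδ⟩ := Metric.eventually_nhds_iff_ball.1 hev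
  have hrbpos : 0 < min (δ / 2) (R / 2) := lt_min (by linarith) (by linarith)
  filter_upwards [Ioc_mem_nhdsGT hrbpos] with r hr
  obtain ⟨hr0, hrle⟩ := hr
  have hballr : volume (closedBall (0 : EuclideanSpace ℝ (Fin d)) r)
      = volume (ball (0 : EuclideanSpace ℝ (Fin d)) r) :=
    Measure.addHaar_closedBall_eq_addHaar_ball _ _ _
  refine ENNReal.div_le_of_le_mul ?_
  rw [hdouble r]
  -- split into main and tail
  have hsplit : (∫⁻ x : EuclideanSpace ℝ (Fin d),
        ∫⁻ y in {y | dist x y ≤ r}, edist (u x) (u y))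
      = (∫⁻ x in {x : EuclideanSpace ℝ (Fin d) | (n₀ : ℝ) + R < ‖x‖},
          ∫⁻ y in {y | dist x y ≤ r}, edist (u x) (u y))
        + ∫⁻ x in {x : EuclideanSpace ℝ (Fin d) | (n₀ : ℝ) + R < ‖x‖}ᶜ,
            ∫⁻ y in {y | dist x y ≤ r}, edist (u x) (u y) :=
    (lintegral_add_compl _ (stmt9_Tm_meas _)).symm
  -- main bound
  have hmain : (∫⁻ x in {x : EuclideanSpace ℝ (Fin d) | (n₀ : ℝ) + R < ‖x‖}ᶜ,
        ∫⁻ y in {y | dist x y ≤ r}, edist (u x) (u y))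
      ≤ ε / 2 * volume (ball (0 : EuclideanSpace ℝ (Fin d)) r) := by
    have hcompl : {x : EuclideanSpace ℝ (Fin d) | (n₀ : ℝ) + R < ‖x‖}ᶜ
        = closedBall (0 : EuclideanSpace ℝ (Fin d)) ((n₀ : ℝ) + R) := by
      ext x
      simp [mem_closedBall, dist_zero_right, not_lt]
    have hnset : {h : EuclideanSpace ℝ (Fin d) | ‖h‖ ≤ r}
        = closedBall (0 : EuclideanSpace ℝ (Fin d)) r := by
      ext h
      simp [mem_closedBall, dist_zero_right]
    have hinner : ∀ x : EuclideanSpace ℝ (Fin d),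
        (∫⁻ y in {y | dist x y ≤ r}, edist (u x) (u y))
        = ∫⁻ h in {h : EuclideanSpace ℝ (Fin d) | ‖h‖ ≤ r}, edist (u x) (u (x + h)) := by
      intro x
      rw [← lintegral_indicator (stmt9_Sy_meas x r),
        ← lintegral_indicator (hnset ▸ measurableSet_closedBall),
        ← lintegral_add_right_eq_self (fun y =>
          ({y | dist x y ≤ r}).indicator (fun y => edist (u x) (u y)) y) x]
      refine lintegral_congr fun h => ?_
      have hd : dist x (h + x) = ‖h‖ := by
        rw [dist_comm, dist_eq_norm]
        simp
      by_cases hh : ‖h‖ ≤ r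
      · rw [Set.indicator_of_mem (show h + x ∈ {y | dist x y ≤ r} from by
            simp only [Set.mem_setOf_eq, hd]; exact hh),
          Set.indicator_of_mem (show h ∈ {h : EuclideanSpace ℝ (Fin d) | ‖h‖ ≤ r} from hh)]
        rw [add_comm]
      · rw [Set.indicator_of_notMem (show h + x ∉ {y | dist x y ≤ r} from by
            simp only [Set.mem_setOf_eq, hd]; exact hh),
          Set.indicator_of_notMem (show h ∉ {h : EuclideanSpace ℝ (Fin d) | ‖h‖ ≤ r} from hh)]
    rw [hcompl]
    calc (∫⁻ x in closedBall (0 : EuclideanSpace ℝ (Fin d)) ((n₀ : ℝ) + R),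
          ∫⁻ y in {y | dist x y ≤ r}, edist (u x) (u y))
        = ∫⁻ x in closedBall (0 : EuclideanSpace ℝ (Fin d)) ((n₀ : ℝ) + R),
            ∫⁻ h in {h : EuclideanSpace ℝ (Fin d) | ‖h‖ ≤ r}, edist (u x) (u (x + h)) :=
          lintegral_congr fun x => hinner x
      _ = ∫⁻ h in {h : EuclideanSpace ℝ (Fin d) | ‖h‖ ≤ r},
            ∫⁻ x in closedBall (0 : EuclideanSpace ℝ (Fin d)) ((n₀ : ℝ) + R),
              edist (u x) (u (x + h)) :=
          lintegral_lintegral_swap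
            (((hu.comp measurable_fst).edist
              (hu.comp (measurable_fst.add measurable_snd))).aemeasurable)
      _ ≤ ∫⁻ _ in {h : EuclideanSpace ℝ (Fin d) | ‖h‖ ≤ r}, ε / 2 := by
          refine setLIntegral_mono measurable_const fun h hh => ?_
          have hmem : h ∈ ball (0 : EuclideanSpace ℝ (Fin d)) δ := by
            rw [mem_ball_zero_iff]
            have h1 : ‖h‖ ≤ r := hh
            have h2 : r ≤ δ / 2 := hrle.trans (min_le_left _ _)
            linarith
          exact (hδ h hmem).le
      _ = ε / 2 * volume {h : EuclideanSpace ℝ (Fin d) | ‖h‖ ≤ r} := setLIntegral_const _ _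
      _ = ε / 2 * volume (ball (0 : EuclideanSpace ℝ (Fin d)) r) := by
          rw [hnset, hballr]
  -- tail bound
  have htail : (∫⁻ x in {x : EuclideanSpace ℝ (Fin d) | (n₀ : ℝ) + R < ‖x‖},
        ∫⁻ y in {y | dist x y ≤ r}, edist (u x) (u y))
      ≤ ε / 2 * volume (ball (0 : EuclideanSpace ℝ (Fin d)) r) := by
    have hest := stmt9_tail_est u hu (r := r) (m := (n₀ : ℝ)) hR
      (hrle.trans (min_le_right _ _))
    have h2 : (∫⁻ x in {x : EuclideanSpace ℝ (Fin d) | (n₀ : ℝ) + R < ‖x‖},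
          ∫⁻ y in {y | dist x y ≤ r}, edist (u x) (u y))
          * volume (ball (0 : EuclideanSpace ℝ (Fin d)) (R / 2))
        ≤ (ε / 2 * volume (closedBall (0 : EuclideanSpace ℝ (Fin d)) r))
          * volume (ball (0 : EuclideanSpace ℝ (Fin d)) (R / 2)) := by
      refine hest.trans ?_
      calc 2 * volume (closedBall (0 : EuclideanSpace ℝ (Fin d)) r)
            * (∫⁻ x in {x : EuclideanSpace ℝ (Fin d) | (n₀ : ℝ) < ‖x‖},
                ∫⁻ y in {y | dist x y ≤ R}, edist (u x) (u y))
          ≤ 2 * volume (closedBall (0 : EuclideanSpace ℝ (Fin d)) r)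
            * (ε / 2 / 2 * volume (ball (0 : EuclideanSpace ℝ (Fin d)) (R / 2))) :=
            mul_le_mul_right hn₀ _
        _ = (ε / 2 * volume (closedBall (0 : EuclideanSpace ℝ (Fin d)) r))
            * volume (ball (0 : EuclideanSpace ℝ (Fin d)) (R / 2)) := by
            rw [show (2 : ℝ≥0∞) * volume (closedBall (0 : EuclideanSpace ℝ (Fin d)) r)
                * (ε / 2 / 2 * volume (ball (0 : EuclideanSpace ℝ (Fin d)) (R / 2)))
                = (2 * (ε / 2 / 2)) * volume (closedBall (0 : EuclideanSpace ℝ (Fin d)) r)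
                  * volume (ball (0 : EuclideanSpace ℝ (Fin d)) (R / 2)) by ring]
            rw [ENNReal.mul_div_cancel' (by norm_num) (by norm_num), mul_assoc]
    have := (ENNReal.mul_le_mul_iff_left hW2pos hW2top).1 h2
    rwa [hballr] at this
  calc (∫⁻ x : EuclideanSpace ℝ (Fin d), ∫⁻ y in {y | dist x y ≤ r}, edist (u x) (u y))
      = _ + _ := hsplit
    _ ≤ ε / 2 * volume (ball (0 : EuclideanSpace ℝ (Fin d)) r)
        + ε / 2 * volume (ball (0 : EuclideanSpace ℝ (Fin d)) r) := add_le_add htail hmain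
    _ = ε * volume (ball (0 : EuclideanSpace ℝ (Fin d)) r) := by
        rw [← add_mul, ENNReal.add_halves]
end

section
/- Let u : ℝ^d → N be Borel measurable and set Θ(r) := (1/|B^d_r|) ∬_{{(x,y) ∈ ℝ^d × ℝ^d : |x − y| ≤ r}} dist_N(u(x), u(y)) dx dy for r > 0. There exists a constant C_d > 0, depending only on d, such that for every R > 0, sup_{r ∈ (0, R)} Θ(r) ≤ C_d · Θ(R). -/
open MeasureTheory Metric Set Module

theorem aux_main {E : Type*} [NormedAddCommGroup E] [NormedSpace ℝ E]
    [MeasureSpace E] [BorelSpace E] [FiniteDimensional ℝ E] [Nontrivial E]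
    [(volume : Measure E).IsAddHaarMeasure] [SigmaFinite (volume : Measure E)]
    {N : Type*} [MetricSpace N] [MeasurableSpace N] [BorelSpace N]
    [SecondCountableTopology N]
    {u : E → N} (hu : Measurable u) {R r : ℝ} (hR : 0 < R) (hr0 : 0 < r) (hrR : r < R) :
    (∫⁻ p in {p : E × E | dist p.1 p.2 ≤ r}, edist (u p.1) (u p.2))
        / volume (ball (0 : E) r)
      ≤ 2 ^ (finrank ℝ E + 1) *
        ((∫⁻ p in {p : E × E | dist p.1 p.2 ≤ R}, edist (u p.1) (u p.2))
          / volume (ball (0 : E) R)) := by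
  classical
  have hgm : Measurable (fun p : E × E => edist (u p.1) (u p.2)) :=
    (hu.comp measurable_fst).edist (hu.comp measurable_snd)
  have hSm : ∀ s : ℝ, MeasurableSet {p : E × E | dist p.1 p.2 ≤ s} := fun s =>
    measurableSet_le (measurable_fst.dist measurable_snd) measurable_const
  have prodEq : (volume : Measure (E × E)) = (volume : Measure E).prod volume := rfl
  -- volume facts
  have hball : ∀ (x : E) (s : ℝ), 0 ≤ s → volume (ball x s) = volume (ball (0 : E) s) := by
    intro x s hs
    rw [Measure.addHaar_ball volume x hs, Measure.addHaar_ball volume 0 hs]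
  have hcball : ∀ (x : E) (s : ℝ), 0 ≤ s → volume (closedBall x s) = volume (ball (0 : E) s) := by
    intro x s hs
    rw [Measure.addHaar_closedBall volume x hs, Measure.addHaar_ball volume 0 hs]
  have hvpos : ∀ s : ℝ, 0 < s → volume (ball (0 : E) s) ≠ 0 := fun s hs =>
    (measure_ball_pos volume 0 hs).ne'
  have hvtop : ∀ s : ℝ, volume (ball (0 : E) s) ≠ ⊤ := fun s => measure_ball_lt_top.ne
  have hvRH : volume (ball (0 : E) R) = 2 ^ finrank ℝ E * volume (ball (0 : E) (R / 2)) := by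
    rw [Measure.addHaar_ball volume 0 hR.le, Measure.addHaar_ball volume 0 (half_pos hR).le,
      ← mul_assoc]
    congr 1
    have h2 : (R : ℝ) ^ finrank ℝ E = 2 ^ finrank ℝ E * (R / 2) ^ finrank ℝ E := by
      rw [← mul_pow]
      have h2' : (2:ℝ) * (R / 2) = R := by ring
      rw [h2']
    rw [h2, ENNReal.ofReal_mul (by positivity), ENNReal.ofReal_pow (by norm_num : (0:ℝ) ≤ 2),
      ENNReal.ofReal_ofNat]
  -- auxiliary functions
  set F : E × E → ENNReal :=
    ({p : E × E | dist p.1 p.2 ≤ R}).indicator (fun q => edist (u q.1) (u q.2)) with hF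
  have hFm : Measurable F := hgm.indicator (hSm R)
  set Φ : E → ENNReal := fun x => ∫⁻ z, F (x, z) with hΦ
  set Ψ : E → ENNReal := fun y => ∫⁻ z, F (z, y) with hΨ
  have hΦm : Measurable Φ := hFm.lintegral_prod_right'
  have hΨm : Measurable Ψ := hFm.lintegral_prod_left'
  have hΦeq : ∀ x : E, Φ x = ∫⁻ z in {z : E | dist x z ≤ R}, edist (u x) (u z) := by
    intro x
    have hset : {z : E | dist x z ≤ R} = closedBall x R := by
      ext z; simp [dist_comm]
    rw [hset, ← lintegral_indicator measurableSet_closedBall]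
    refine lintegral_congr fun z => ?_
    by_cases h : dist x z ≤ R
    · simp [hF, Set.indicator_apply, h, mem_closedBall, dist_comm]
    · simp [hF, Set.indicator_apply, h, mem_closedBall, dist_comm]
  have hΨeq : ∀ y : E, Ψ y = ∫⁻ z in {z : E | dist z y ≤ R}, edist (u z) (u y) := by
    intro y
    have hset : {z : E | dist z y ≤ R} = closedBall y R := rfl
    rw [hset, ← lintegral_indicator measurableSet_closedBall]
    refine lintegral_congr fun z => ?_
    by_cases h : dist z y ≤ R
    · simp [hF, Set.indicator_apply, h, mem_closedBall]
    · simp [hF, Set.indicator_apply, h, mem_closedBall]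
  have hΦint : ∫⁻ x, Φ x
      = ∫⁻ p in {p : E × E | dist p.1 p.2 ≤ R}, edist (u p.1) (u p.2) := by
    rw [hΦ, ← lintegral_prod F hFm.aemeasurable, ← prodEq, hF,
      lintegral_indicator (hSm R)]
  have hΨint : ∫⁻ y, Ψ y
      = ∫⁻ p in {p : E × E | dist p.1 p.2 ≤ R}, edist (u p.1) (u p.2) := by
    rw [hΨ, ← lintegral_prod_symm F hFm.aemeasurable, ← prodEq, hF,
      lintegral_indicator (hSm R)]
  -- pointwise bound
  have hpt : ∀ p ∈ {p : E × E | dist p.1 p.2 ≤ r},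
      edist (u p.1) (u p.2) * volume (ball (0 : E) (R / 2)) ≤ Φ p.1 + Ψ p.2 := by
    rintro ⟨x, y⟩ hp
    have hp' : dist x y ≤ r := hp
    set m := midpoint ℝ x y with hm
    have hxm : dist x m = dist x y / 2 := by
      rw [hm, dist_left_midpoint]; norm_num; ring
    have hmy : dist m y = dist x y / 2 := by
      rw [hm, dist_midpoint_right]; norm_num; ring
    have hb1 : ball m (R / 2) ⊆ {z : E | dist x z ≤ R} := by
      intro z hz
      have hz' : dist m z < R / 2 := by rw [dist_comm]; exact hz
      have h3 : dist x z ≤ dist x m + dist m z := dist_triangle x m z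
      simp only [Set.mem_setOf_eq]
      rw [hxm] at h3
      linarith
    have hb2 : ball m (R / 2) ⊆ {z : E | dist z y ≤ R} := by
      intro z hz
      have hz' : dist z m < R / 2 := hz
      have h3 : dist z y ≤ dist z m + dist m y := dist_triangle z m y
      simp only [Set.mem_setOf_eq]
      rw [hmy] at h3
      linarith
    calc edist (u x) (u y) * volume (ball (0 : E) (R / 2))
        = ∫⁻ _ in ball m (R / 2), edist (u x) (u y) := by
          rw [setLIntegral_const, hball m (R / 2) (half_pos hR).le]
      _ ≤ ∫⁻ z in ball m (R / 2), (edist (u x) (u z) + edist (u z) (u y)) :=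
          setLIntegral_mono' measurableSet_ball (fun z _ => edist_triangle _ _ _)
      _ = (∫⁻ z in ball m (R / 2), edist (u x) (u z))
            + ∫⁻ z in ball m (R / 2), edist (u z) (u y) :=
          lintegral_add_left (measurable_const.edist hu) _
      _ ≤ Φ x + Ψ y := by
          refine add_le_add ?_ ?_
          · exact (lintegral_mono_set hb1).trans_eq (hΦeq x).symm
          · exact (lintegral_mono_set hb2).trans_eq (hΨeq y).symm
  -- Fubini computations
  have A1 : ∫⁻ p in {p : E × E | dist p.1 p.2 ≤ r}, Φ p.1
      = (∫⁻ x, Φ x) * volume (ball (0 : E) r) := by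
    calc ∫⁻ p in {p : E × E | dist p.1 p.2 ≤ r}, Φ p.1
        = ∫⁻ p, ({p : E × E | dist p.1 p.2 ≤ r}).indicator (fun p : E × E => Φ p.1) p :=
          (lintegral_indicator (hSm r) _).symm
      _ = ∫⁻ p, ({p : E × E | dist p.1 p.2 ≤ r}).indicator (fun p : E × E => Φ p.1) p
            ∂((volume : Measure E).prod volume) := by rw [← prodEq]
      _ = ∫⁻ x, ∫⁻ y, ({p : E × E | dist p.1 p.2 ≤ r}).indicator
            (fun p : E × E => Φ p.1) (x, y) :=
          lintegral_prod _ ((hΦm.comp measurable_fst).indicator (hSm r)).aemeasurable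
      _ = ∫⁻ x, Φ x * volume (ball (0 : E) r) := by
          refine lintegral_congr fun x => ?_
          have heq : ∀ y : E, ({p : E × E | dist p.1 p.2 ≤ r}).indicator
              (fun p : E × E => Φ p.1) (x, y)
              = (closedBall x r).indicator (fun _ => Φ x) y := by
            intro y
            by_cases h : dist x y ≤ r
            · simp [Set.indicator_apply, h, mem_closedBall, dist_comm]
            · simp [Set.indicator_apply, h, mem_closedBall, dist_comm]
          rw [lintegral_congr heq, lintegral_indicator_const measurableSet_closedBall,
            hcball x r hr0.le]
      _ = (∫⁻ x, Φ x) * volume (ball (0 : E) r) := lintegral_mul_const _ hΦm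
  have A2 : ∫⁻ p in {p : E × E | dist p.1 p.2 ≤ r}, Ψ p.2
      = (∫⁻ y, Ψ y) * volume (ball (0 : E) r) := by
    calc ∫⁻ p in {p : E × E | dist p.1 p.2 ≤ r}, Ψ p.2
        = ∫⁻ p, ({p : E × E | dist p.1 p.2 ≤ r}).indicator (fun p : E × E => Ψ p.2) p :=
          (lintegral_indicator (hSm r) _).symm
      _ = ∫⁻ p, ({p : E × E | dist p.1 p.2 ≤ r}).indicator (fun p : E × E => Ψ p.2) p
            ∂((volume : Measure E).prod volume) := by rw [← prodEq]
      _ = ∫⁻ y, ∫⁻ x, ({p : E × E | dist p.1 p.2 ≤ r}).indicator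
            (fun p : E × E => Ψ p.2) (x, y) :=
          lintegral_prod_symm _ ((hΨm.comp measurable_snd).indicator (hSm r)).aemeasurable
      _ = ∫⁻ y, Ψ y * volume (ball (0 : E) r) := by
          refine lintegral_congr fun y => ?_
          have heq : ∀ x : E, ({p : E × E | dist p.1 p.2 ≤ r}).indicator
              (fun p : E × E => Ψ p.2) (x, y)
              = (closedBall y r).indicator (fun _ => Ψ y) x := by
            intro x
            by_cases h : dist x y ≤ r
            · simp [Set.indicator_apply, h, mem_closedBall]
            · simp [Set.indicator_apply, h, mem_closedBall]
          rw [lintegral_congr heq, lintegral_indicator_const measurableSet_closedBall,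
            hcball y r hr0.le]
      _ = (∫⁻ y, Ψ y) * volume (ball (0 : E) r) := lintegral_mul_const _ hΨm
  set IR := ∫⁻ p in {p : E × E | dist p.1 p.2 ≤ R}, edist (u p.1) (u p.2) with hIR
  have key : (∫⁻ p in {p : E × E | dist p.1 p.2 ≤ r}, edist (u p.1) (u p.2))
      * volume (ball (0 : E) (R / 2)) ≤ 2 * (volume (ball (0 : E) r) * IR) := by
    calc (∫⁻ p in {p : E × E | dist p.1 p.2 ≤ r}, edist (u p.1) (u p.2))
          * volume (ball (0 : E) (R / 2))
        = ∫⁻ p in {p : E × E | dist p.1 p.2 ≤ r},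
            (edist (u p.1) (u p.2) * volume (ball (0 : E) (R / 2))) :=
          (lintegral_mul_const _ hgm).symm
      _ ≤ ∫⁻ p in {p : E × E | dist p.1 p.2 ≤ r}, (Φ p.1 + Ψ p.2) :=
          setLIntegral_mono' (hSm r) hpt
      _ = (∫⁻ p in {p : E × E | dist p.1 p.2 ≤ r}, Φ p.1)
            + ∫⁻ p in {p : E × E | dist p.1 p.2 ≤ r}, Ψ p.2 :=
          lintegral_add_left (hΦm.comp measurable_fst) _
      _ = (∫⁻ x, Φ x) * volume (ball (0 : E) r)
            + (∫⁻ y, Ψ y) * volume (ball (0 : E) r) := by rw [A1, A2]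
      _ = 2 * (volume (ball (0 : E) r) * IR) := by rw [hΦint, hΨint]; ring
  -- final algebra
  rw [← mul_div_assoc]
  have hRHS : (2 : ENNReal) ^ (finrank ℝ E + 1) * IR / volume (ball (0 : E) R)
      = 2 * IR / volume (ball (0 : E) (R / 2)) := by
    rw [hvRH]
    have h4 : (2 : ENNReal) ^ (finrank ℝ E + 1) * IR = 2 ^ finrank ℝ E * (2 * IR) := by ring
    rw [h4, ENNReal.mul_div_mul_left _ _ (by positivity)
      ((ENNReal.pow_lt_top (by norm_num : (2:ENNReal) < ⊤)).ne)]
  rw [hRHS, ENNReal.div_le_iff_le_mul (Or.inl (hvpos r hr0)) (Or.inl (hvtop r))]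
  have h1 : (∫⁻ p in {p : E × E | dist p.1 p.2 ≤ r}, edist (u p.1) (u p.2))
      ≤ 2 * (volume (ball (0 : E) r) * IR) / volume (ball (0 : E) (R / 2)) := by
    rw [ENNReal.le_div_iff_mul_le (Or.inl (hvpos _ (half_pos hR))) (Or.inl (hvtop _))]
    exact key
  refine h1.trans (le_of_eq ?_)
  simp only [div_eq_mul_inv]
  ring

/-- With `Θ(r) = (1/|B^d_r|) ∬_{|x-y| ≤ r} dist (u x) (u y)`, there is a constant
`C_d > 0`, depending only on `d`, such that `sup_{r ∈ (0,R)} Θ(r) ≤ C_d Θ(R)`. -/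
theorem stmt_10 (d : ℕ) (hd : 1 ≤ d)
    {N : Type*} [MetricSpace N] [CompleteSpace N] [TopologicalSpace.SeparableSpace N]
    [MeasurableSpace N] [BorelSpace N] :
    ∃ C : ℝ, 0 < C ∧ ∀ u : EuclideanSpace ℝ (Fin d) → N, Measurable u →
      ∀ R : ℝ, 0 < R →
        (⨆ r ∈ Set.Ioo (0 : ℝ) R,
            (∫⁻ p in {p : EuclideanSpace ℝ (Fin d) × EuclideanSpace ℝ (Fin d) |
                dist p.1 p.2 ≤ r}, edist (u p.1) (u p.2))
              / volume (Metric.ball (0 : EuclideanSpace ℝ (Fin d)) r))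
          ≤ ENNReal.ofReal C
              * ((∫⁻ p in {p : EuclideanSpace ℝ (Fin d) × EuclideanSpace ℝ (Fin d) |
                    dist p.1 p.2 ≤ R}, edist (u p.1) (u p.2))
                  / volume (Metric.ball (0 : EuclideanSpace ℝ (Fin d)) R)) := by
  refine ⟨2 ^ (d + 1), by positivity, ?_⟩
  intro u hu R hR
  haveI : Nonempty (Fin d) := Fin.pos_iff_nonempty.mp hd
  haveI : Nontrivial (EuclideanSpace ℝ (Fin d)) :=
    (WithLp.equiv 2 (∀ _ : Fin d, ℝ)).nontrivial
  haveI : SecondCountableTopology N := UniformSpace.secondCountable_of_separable N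
  refine iSup₂_le fun r hr => ?_
  have h := aux_main (E := EuclideanSpace ℝ (Fin d)) hu hR hr.1 hr.2
  rw [finrank_euclideanSpace_fin] at h
  have hC : ENNReal.ofReal ((2 : ℝ) ^ (d + 1)) = 2 ^ (d + 1) := by
    rw [ENNReal.ofReal_pow (by norm_num : (0:ℝ) ≤ 2), ENNReal.ofReal_ofNat]
  rw [hC]
  exact h
end

section
/- (Scaling lemma.) Let u : ℝ^d → N be Borel measurable. For all 0 < ℓ ≤ L, (1/L^{d+1}) ∬_{{(x,y) ∈ ℝ^d × ℝ^d : |x − y| ≤ L}} dist_N(u(x), u(y)) dx dy ≤ (2^{d+1}/ℓ^{d+1}) ∬_{{(x,y) ∈ ℝ^d × ℝ^d : |x − y| ≤ ℓ}} dist_N(u(x), u(y)) dx dy. -/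
open MeasureTheory Set
open scoped ENNReal

/-- Change of variables `y ↦ (x+y)/2` in the inner integral. -/
lemma aux_key (d : ℕ) (F : EuclideanSpace ℝ (Fin d) → EuclideanSpace ℝ (Fin d) → ℝ≥0∞)
    (hF : Measurable (Function.uncurry F)) :
    ∫⁻ x, ∫⁻ y, F x ((2⁻¹ : ℝ) • (x + y)) = (2 : ℝ≥0∞) ^ d * ∫⁻ x, ∫⁻ z, F x z := by
  have h2 : ((2 : ℝ)⁻¹) ≠ 0 := by norm_num
  have hmap : Measure.map (((2 : ℝ)⁻¹) • ·) (volume : Measure (EuclideanSpace ℝ (Fin d)))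
      = ((2 : ℝ≥0∞) ^ d) • volume := by
    rw [Measure.map_addHaar_smul volume h2]
    congr 1
    rw [finrank_euclideanSpace_fin]
    rw [abs_of_pos (by positivity), inv_pow, inv_inv,
      ENNReal.ofReal_pow (by norm_num), ENNReal.ofReal_ofNat]
  have hinner : ∀ x : EuclideanSpace ℝ (Fin d),
      ∫⁻ y, F x ((2⁻¹ : ℝ) • (x + y)) = (2 : ℝ≥0∞) ^ d * ∫⁻ z, F x z := by
    intro x
    have hFx : Measurable (F x) := hF.comp (measurable_const.prodMk measurable_id)
    calc ∫⁻ y, F x ((2⁻¹ : ℝ) • (x + y))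
        = ∫⁻ w, F x ((2⁻¹ : ℝ) • w) :=
          lintegral_add_left_eq_self (fun w => F x ((2⁻¹ : ℝ) • w)) x
      _ = ∫⁻ z, F x z ∂(Measure.map (((2 : ℝ)⁻¹) • ·) volume) :=
          (lintegral_map hFx (measurable_const_smul _)).symm
      _ = (2 : ℝ≥0∞) ^ d * ∫⁻ z, F x z := by
          rw [hmap, lintegral_smul_measure, smul_eq_mul]
  calc ∫⁻ x, ∫⁻ y, F x ((2⁻¹ : ℝ) • (x + y))
      = ∫⁻ x, (2 : ℝ≥0∞) ^ d * ∫⁻ z, F x z := by simp_rw [hinner]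
    _ = (2 : ℝ≥0∞) ^ d * ∫⁻ x, ∫⁻ z, F x z :=
        lintegral_const_mul' _ _ (by simp)

/-- Doubling lemma: `E(2r) ≤ 2^(d+1) E(r)`. -/
lemma aux_double (d : ℕ) {N : Type*} [MetricSpace N]
    [TopologicalSpace.SeparableSpace N] [MeasurableSpace N] [BorelSpace N]
    (u : EuclideanSpace ℝ (Fin d) → N) (hu : Measurable u) (r : ℝ) :
    (∫⁻ p in {p : EuclideanSpace ℝ (Fin d) × EuclideanSpace ℝ (Fin d) |
        dist p.1 p.2 ≤ 2 * r}, edist (u p.1) (u p.2))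
    ≤ (2 : ℝ≥0∞) ^ (d + 1) *
      ∫⁻ p in {p : EuclideanSpace ℝ (Fin d) × EuclideanSpace ℝ (Fin d) |
        dist p.1 p.2 ≤ r}, edist (u p.1) (u p.2) := by
  haveI : SecondCountableTopology N := UniformSpace.secondCountable_of_separable N
  have hSm : ∀ s : ℝ,
      MeasurableSet {p : EuclideanSpace ℝ (Fin d) × EuclideanSpace ℝ (Fin d) |
        dist p.1 p.2 ≤ s} := fun s =>
    measurableSet_le (by fun_prop) measurable_const
  have hf : Measurable fun p : EuclideanSpace ℝ (Fin d) × EuclideanSpace ℝ (Fin d) =>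
      edist (u p.1) (u p.2) :=
    (hu.comp measurable_fst).edist (hu.comp measurable_snd)
  have hmid1 : ∀ x y : EuclideanSpace ℝ (Fin d),
      dist x ((2⁻¹ : ℝ) • (x + y)) = dist x y / 2 := by
    intro x y
    have h : x - (2⁻¹ : ℝ) • (x + y) = (2⁻¹ : ℝ) • (x - y) := by module
    rw [dist_eq_norm, dist_eq_norm, h, norm_smul]
    simp [Real.norm_eq_abs]
    ring
  have hmid2 : ∀ x y : EuclideanSpace ℝ (Fin d),
      dist ((2⁻¹ : ℝ) • (x + y)) y = dist x y / 2 := by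
    intro x y
    have h : (2⁻¹ : ℝ) • (x + y) - y = (2⁻¹ : ℝ) • (x - y) := by module
    rw [dist_eq_norm, dist_eq_norm, h, norm_smul]
    simp [Real.norm_eq_abs]
    ring
  set f : EuclideanSpace ℝ (Fin d) × EuclideanSpace ℝ (Fin d) → ℝ≥0∞ :=
    fun p => edist (u p.1) (u p.2) with hfdef
  set m : EuclideanSpace ℝ (Fin d) × EuclideanSpace ℝ (Fin d) → EuclideanSpace ℝ (Fin d) :=
    fun p => (2⁻¹ : ℝ) • (p.1 + p.2) with hmdef
  have hm : Measurable m := by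
    exact (measurable_fst.add measurable_snd).const_smul (2⁻¹ : ℝ)
  set g1 : EuclideanSpace ℝ (Fin d) × EuclideanSpace ℝ (Fin d) → ℝ≥0∞ :=
    fun p => edist (u p.1) (u (m p)) with hg1def
  set g2 : EuclideanSpace ℝ (Fin d) × EuclideanSpace ℝ (Fin d) → ℝ≥0∞ :=
    fun p => edist (u (m p)) (u p.2) with hg2def
  have hg1 : Measurable g1 := (hu.comp measurable_fst).edist (hu.comp hm)
  have hg2 : Measurable g2 := (hu.comp hm).edist (hu.comp measurable_snd)
  set S2 := {p : EuclideanSpace ℝ (Fin d) × EuclideanSpace ℝ (Fin d) |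
    dist p.1 p.2 ≤ 2 * r} with hS2def
  set S1 := {p : EuclideanSpace ℝ (Fin d) × EuclideanSpace ℝ (Fin d) |
    dist p.1 p.2 ≤ r} with hS1def
  have hS2 : MeasurableSet S2 := hSm (2 * r)
  have hS1 : MeasurableSet S1 := hSm r
  -- Term 1
  have hF1 : Function.uncurry (fun x z : EuclideanSpace ℝ (Fin d) =>
      ({z : EuclideanSpace ℝ (Fin d) | dist x z ≤ r}.indicator
        (fun z => edist (u x) (u z)) z)) = S1.indicator f := by
    funext p
    simp [Function.uncurry, Set.indicator_apply, hS1def, hfdef]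
  have hterm1 : ∫⁻ p, S2.indicator g1 p = (2 : ℝ≥0∞) ^ d * ∫⁻ p in S1, f p := by
    have hmeas : Measurable (S2.indicator g1) := hg1.indicator hS2
    rw [Measure.volume_eq_prod, lintegral_prod _ hmeas.aemeasurable]
    have heq : ∀ x y : EuclideanSpace ℝ (Fin d), S2.indicator g1 (x, y)
        = ({z : EuclideanSpace ℝ (Fin d) | dist x z ≤ r}.indicator
            (fun z => edist (u x) (u z))) ((2⁻¹ : ℝ) • (x + y)) := by
      intro x y
      simp only [Set.indicator_apply, hS2def, Set.mem_setOf_eq, hg1def, hmdef]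
      refine if_congr ?_ rfl rfl
      rw [hmid1]
      constructor <;> intro <;> linarith
    simp_rw [heq]
    rw [aux_key d _ (by rw [hF1]; exact hf.indicator hS1)]
    congr 1
    have hpt : ∀ x z : EuclideanSpace ℝ (Fin d),
        ({z : EuclideanSpace ℝ (Fin d) | dist x z ≤ r}.indicator
          (fun z => edist (u x) (u z)) z) = S1.indicator f (x, z) := by
      intro x z
      have := congrFun hF1 (x, z)
      simpa [Function.uncurry] using this
    rw [lintegral_congr fun x => lintegral_congr fun z => hpt x z]
    rw [← lintegral_prod _ ((hf.indicator hS1).aemeasurable), lintegral_indicator hS1]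
  -- Term 2
  have hF2 : Function.uncurry (fun y z : EuclideanSpace ℝ (Fin d) =>
      ({z : EuclideanSpace ℝ (Fin d) | dist z y ≤ r}.indicator
        (fun z => edist (u z) (u y)) z)) =
      (fun q : EuclideanSpace ℝ (Fin d) × EuclideanSpace ℝ (Fin d) =>
        S1.indicator f (q.2, q.1)) := by
    funext p
    simp [Function.uncurry, Set.indicator_apply, hS1def, hfdef]
  have hswap : Measurable fun q : EuclideanSpace ℝ (Fin d) × EuclideanSpace ℝ (Fin d) =>
      S1.indicator f (q.2, q.1) :=
    (hf.indicator hS1).comp (measurable_snd.prodMk measurable_fst)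
  have hterm2 : ∫⁻ p, S2.indicator g2 p = (2 : ℝ≥0∞) ^ d * ∫⁻ p in S1, f p := by
    have hmeas : Measurable (S2.indicator g2) := hg2.indicator hS2
    rw [Measure.volume_eq_prod, lintegral_prod _ hmeas.aemeasurable]
    rw [lintegral_lintegral_swap (by exact hmeas.aemeasurable)]
    have heq : ∀ y x : EuclideanSpace ℝ (Fin d), S2.indicator g2 (x, y)
        = ({z : EuclideanSpace ℝ (Fin d) | dist z y ≤ r}.indicator
            (fun z => edist (u z) (u y))) ((2⁻¹ : ℝ) • (y + x)) := by
      intro y x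
      simp only [Set.indicator_apply, hS2def, Set.mem_setOf_eq, hg2def, hmdef]
      rw [add_comm y x]
      refine if_congr ?_ rfl rfl
      rw [hmid2]
      constructor <;> intro <;> linarith
    simp_rw [heq]
    rw [aux_key d _ (by rw [hF2]; exact hswap)]
    congr 1
    have hGH : ∀ y z : EuclideanSpace ℝ (Fin d),
        ({z : EuclideanSpace ℝ (Fin d) | dist z y ≤ r}.indicator
          (fun z => edist (u z) (u y)) z) = S1.indicator f (z, y) := by
      intro y z
      have := congrFun hF2 (y, z)
      simpa [Function.uncurry] using this
    rw [lintegral_congr fun y => lintegral_congr fun z => hGH y z]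
    rw [lintegral_lintegral_swap (by exact hswap.aemeasurable)]
    rw [← lintegral_prod _ ((hf.indicator hS1).aemeasurable), lintegral_indicator hS1]
  -- combine
  calc ∫⁻ p in S2, f p = ∫⁻ p, S2.indicator f p := (lintegral_indicator hS2 f).symm
    _ ≤ ∫⁻ p, (S2.indicator g1 p + S2.indicator g2 p) := by
        refine lintegral_mono fun p => ?_
        by_cases hp : p ∈ S2
        · simp only [Set.indicator_of_mem hp]
          exact edist_triangle _ _ _
        · simp [Set.indicator_of_notMem hp]
    _ = (∫⁻ p, S2.indicator g1 p) + ∫⁻ p, S2.indicator g2 p := by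
        exact lintegral_add_left (hg1.indicator hS2) _
    _ = (2 : ℝ≥0∞) ^ (d + 1) * ∫⁻ p in S1, f p := by
        rw [hterm1, hterm2, pow_succ]
        ring

/-- Iterated doubling. -/
lemma aux_iter (d : ℕ) {N : Type*} [MetricSpace N]
    [TopologicalSpace.SeparableSpace N] [MeasurableSpace N] [BorelSpace N]
    (u : EuclideanSpace ℝ (Fin d) → N) (hu : Measurable u) (ℓ : ℝ) (k : ℕ) :
    (∫⁻ p in {p : EuclideanSpace ℝ (Fin d) × EuclideanSpace ℝ (Fin d) |
        dist p.1 p.2 ≤ 2 ^ k * ℓ}, edist (u p.1) (u p.2))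
    ≤ ((2 : ℝ≥0∞) ^ (d + 1)) ^ k *
      ∫⁻ p in {p : EuclideanSpace ℝ (Fin d) × EuclideanSpace ℝ (Fin d) |
        dist p.1 p.2 ≤ ℓ}, edist (u p.1) (u p.2) := by
  induction k with
  | zero => simp
  | succ k ih =>
    have h : (2 : ℝ) ^ (k + 1) * ℓ = 2 * ((2 : ℝ) ^ k * ℓ) := by ring
    rw [h]
    calc (∫⁻ p in {p : EuclideanSpace ℝ (Fin d) × EuclideanSpace ℝ (Fin d) |
          dist p.1 p.2 ≤ 2 * (2 ^ k * ℓ)}, edist (u p.1) (u p.2))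
        ≤ (2 : ℝ≥0∞) ^ (d + 1) *
          ∫⁻ p in {p : EuclideanSpace ℝ (Fin d) × EuclideanSpace ℝ (Fin d) |
            dist p.1 p.2 ≤ 2 ^ k * ℓ}, edist (u p.1) (u p.2) :=
          aux_double d u hu _
      _ ≤ (2 : ℝ≥0∞) ^ (d + 1) * (((2 : ℝ≥0∞) ^ (d + 1)) ^ k *
          ∫⁻ p in {p : EuclideanSpace ℝ (Fin d) × EuclideanSpace ℝ (Fin d) |
            dist p.1 p.2 ≤ ℓ}, edist (u p.1) (u p.2)) :=
          mul_le_mul_right ih _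
      _ = ((2 : ℝ≥0∞) ^ (d + 1)) ^ (k + 1) *
          ∫⁻ p in {p : EuclideanSpace ℝ (Fin d) × EuclideanSpace ℝ (Fin d) |
            dist p.1 p.2 ≤ ℓ}, edist (u p.1) (u p.2) := by
          rw [pow_succ]
          ring

/-- Scaling lemma. -/
theorem stmt_12 (d : ℕ) (hd : 1 ≤ d)
    {N : Type*} [MetricSpace N] [CompleteSpace N] [TopologicalSpace.SeparableSpace N]
    [MeasurableSpace N] [BorelSpace N]
    (u : EuclideanSpace ℝ (Fin d) → N) (hu : Measurable u)
    (ℓ L : ℝ) (hℓ : 0 < ℓ) (hℓL : ℓ ≤ L) :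
    (∫⁻ p in {p : EuclideanSpace ℝ (Fin d) × EuclideanSpace ℝ (Fin d) |
        dist p.1 p.2 ≤ L}, edist (u p.1) (u p.2))
      / ENNReal.ofReal (L ^ (d + 1))
    ≤ ENNReal.ofReal (2 ^ (d + 1) / ℓ ^ (d + 1))
        * ∫⁻ p in {p : EuclideanSpace ℝ (Fin d) × EuclideanSpace ℝ (Fin d) |
            dist p.1 p.2 ≤ ℓ}, edist (u p.1) (u p.2) := by
  have hL0 : 0 < L := lt_of_lt_of_le hℓ hℓL
  -- choose k with L/ℓ ≤ 2^k ≤ 2 L/ℓ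
  have ht1 : (1 : ℝ) ≤ L / ℓ := (one_le_div hℓ).2 hℓL
  have hex : ∃ k : ℕ, L / ℓ ≤ 2 ^ k := by
    obtain ⟨k, hk⟩ := pow_unbounded_of_one_lt (L / ℓ) (by norm_num : (1:ℝ) < 2)
    exact ⟨k, hk.le⟩
  classical
  set k := Nat.find hex with hkdef
  have hk1 : L / ℓ ≤ 2 ^ k := Nat.find_spec hex
  have hk2 : (2 : ℝ) ^ k ≤ 2 * (L / ℓ) := by
    rcases Nat.eq_zero_or_pos k with h0 | hpos
    · rw [h0]; simpa using by linarith
    · have := Nat.find_min hex (Nat.sub_lt hpos one_pos)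
      push_neg at this
      have hk' : k - 1 + 1 = k := Nat.succ_pred_eq_of_pos hpos
      have h2k : (2 : ℝ) ^ k = 2 ^ (k - 1) * 2 := by
        nth_rewrite 1 [← hk']
        rw [pow_succ]
      rw [h2k]
      nlinarith [this]
  have hLle : L ≤ 2 ^ k * ℓ := by
    rw [div_le_iff₀ hℓ] at hk1
    linarith
  -- monotonicity
  have hmono : (∫⁻ p in {p : EuclideanSpace ℝ (Fin d) × EuclideanSpace ℝ (Fin d) |
        dist p.1 p.2 ≤ L}, edist (u p.1) (u p.2))
      ≤ ∫⁻ p in {p : EuclideanSpace ℝ (Fin d) × EuclideanSpace ℝ (Fin d) |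
        dist p.1 p.2 ≤ 2 ^ k * ℓ}, edist (u p.1) (u p.2) :=
    lintegral_mono' (Measure.restrict_mono (fun p hp => le_trans hp hLle) le_rfl) le_rfl
  have hmain := hmono.trans (aux_iter d u hu ℓ k)
  -- coefficient bound
  have hcoef : ((2 : ℝ≥0∞) ^ (d + 1)) ^ k
      ≤ ENNReal.ofReal (2 ^ (d + 1) / ℓ ^ (d + 1)) * ENNReal.ofReal (L ^ (d + 1)) := by
    rw [← ENNReal.ofReal_mul (by positivity)]
    have h2 : ((2 : ℝ≥0∞) ^ (d + 1)) ^ k = ENNReal.ofReal (((2 : ℝ) ^ k) ^ (d + 1)) := by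
      rw [ENNReal.ofReal_pow (by positivity), ENNReal.ofReal_pow (by norm_num),
        ENNReal.ofReal_ofNat, ← pow_mul, ← pow_mul, Nat.mul_comm]
    rw [h2]
    apply ENNReal.ofReal_le_ofReal
    have harg : 2 ^ (d + 1) / ℓ ^ (d + 1) * L ^ (d + 1) = (2 * (L / ℓ)) ^ (d + 1) := by
      rw [mul_pow, div_pow]
      ring
    rw [harg]
    exact pow_le_pow_left₀ (by positivity) hk2 _
  rw [ENNReal.div_le_iff (by positivity) ENNReal.ofReal_ne_top]
  calc (∫⁻ p in {p : EuclideanSpace ℝ (Fin d) × EuclideanSpace ℝ (Fin d) |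
        dist p.1 p.2 ≤ L}, edist (u p.1) (u p.2))
      ≤ ((2 : ℝ≥0∞) ^ (d + 1)) ^ k *
        ∫⁻ p in {p : EuclideanSpace ℝ (Fin d) × EuclideanSpace ℝ (Fin d) |
          dist p.1 p.2 ≤ ℓ}, edist (u p.1) (u p.2) := hmain
    _ ≤ (ENNReal.ofReal (2 ^ (d + 1) / ℓ ^ (d + 1)) * ENNReal.ofReal (L ^ (d + 1))) *
        ∫⁻ p in {p : EuclideanSpace ℝ (Fin d) × EuclideanSpace ℝ (Fin d) |
          dist p.1 p.2 ≤ ℓ}, edist (u p.1) (u p.2) := mul_le_mul_left hcoef _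
    _ = ENNReal.ofReal (2 ^ (d + 1) / ℓ ^ (d + 1)) *
        (∫⁻ p in {p : EuclideanSpace ℝ (Fin d) × EuclideanSpace ℝ (Fin d) |
          dist p.1 p.2 ≤ ℓ}, edist (u p.1) (u p.2)) * ENNReal.ofReal (L ^ (d + 1)) := by
        ring
end
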